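/- arXiv:1411.5139 — 7 statements merged into one kernel-verified Lean document; each statement's English description precedes it below -/
import Mathlib

section
/- Let A be a unital complex Banach algebra (not necessarily commutative) and let a ∈ A. Suppose that 0 belongs to the unbounded connected component of ℂ \ σ_A(a), where σ_A(a) is the spectrum of a in A. Then there exists b ∈ A such that e^b = a. -/
open NormedSpace


lemma joined_units {B : Type*} [NormedRing B] [CompleteSpace B] (u v : Bˣ)
    (f : Path (u : B) (v : B)) (hf : ∀ t, IsUnit (f t)) : Joined u v := by
  refine ⟨{ toFun := fun t => (hf t).unit
            continuous_toFun := ?_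
            source' := Units.ext (by simp)
            target' := Units.ext (by simp) }⟩
  apply Units.continuous_iff.2 ⟨by convert f.continuous using 1; funext t; exact (hf t).unit_spec, ?_⟩
  have heq : (fun t => (((hf t).unit)⁻¹ : Bˣ).val) = fun t => Ring.inverse (f t) := by
    funext t
    rw [← Ring.inverse_unit, IsUnit.unit_spec]
  rw [heq]
  refine continuous_iff_continuousAt.2 fun t =>
    ContinuousAt.comp (g := Ring.inverse) ?_ f.continuous.continuousAt
  exact (hf t).unit_spec ▸ NormedRing.inverse_continuousAt (hf t).unit

lemma exp_range_nhds {B : Type*} [NormedRing B] [NormedAlgebra ℂ B] [CompleteSpace B] :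
    Set.range (exp (𝔸 := B)) ∈ nhds (1 : B) := by
  have hf : HasStrictFDerivAt (exp) ((ContinuousLinearEquiv.refl ℂ B : B ≃L[ℂ] B) : B →L[ℂ] B)
      (0 : B) := by
    exact (hasStrictFDerivAt_exp_zero (𝕂 := ℂ) (𝔸 := B))
  have h := hf.map_nhds_eq_of_equiv
  rw [exp_zero] at h
  rw [← h]
  exact Filter.range_mem_map

theorem comm_case {B : Type*} [NormedCommRing B] [NormOneClass B] [NormedAlgebra ℂ B]
    [CompleteSpace B] (a : B)
    (h0 : (0 : ℂ) ∈ (spectrum ℂ a)ᶜ)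
    (hunb : ¬ Bornology.IsBounded (connectedComponentIn (spectrum ℂ a)ᶜ 0)) :
    ∃ b : B, exp b = a := by
  classical
  letI : NormedAlgebra ℚ B := NormedAlgebra.restrictScalars ℚ ℂ B
  set C := connectedComponentIn (spectrum ℂ a)ᶜ 0 with hC
  have hcompl : (spectrum ℂ a)ᶜ = resolventSet ℂ a := by
    rw [spectrum, compl_compl]
  have hCopen : IsOpen C := by
    rw [hC, hcompl]
    exact (spectrum.isOpen_resolventSet a).connectedComponentIn
  obtain ⟨l1, hl1C, hl1⟩ : ∃ l1 ∈ C, ‖a‖ < ‖l1‖ := by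
    by_contra h
    push_neg at h
    exact hunb (isBounded_iff_forall_norm_le.2 ⟨‖a‖, h⟩)
  have h0C : (0 : ℂ) ∈ C := mem_connectedComponentIn h0
  have hl1ne : l1 ≠ 0 := by
    intro h; rw [h, norm_zero] at hl1; exact absurd (norm_nonneg a) (not_le.2 hl1)
  have hconn : IsConnected C := (isConnected_connectedComponentIn_iff).2 h0
  have hpc : IsPathConnected C := (hCopen.isConnected_iff_isPathConnected).1 hconn
  obtain ⟨γ, hγ⟩ : JoinedIn C 0 l1 := hpc.joinedIn 0 h0C l1 hl1C
  have hres : ∀ z ∈ C, IsUnit (a - z • (1 : B)) := by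
    intro z hz
    have h1 : z ∈ resolventSet ℂ a := hcompl ▸ connectedComponentIn_subset _ _ hz
    have h2 : IsUnit (algebraMap ℂ B z - a) := h1
    have h3 : a - z • (1 : B) = -(algebraMap ℂ B z - a) := by
      rw [Algebra.algebraMap_eq_smul_one]; ring
    rw [h3]
    exact h2.neg
  have hbig : ∀ (x : B), ‖x‖ < ‖l1‖ → IsUnit (x - l1 • (1 : B)) := by
    intro x hx
    have hfac : x - l1 • (1 : B) = -(l1 • (1 - l1⁻¹ • x)) := by
      rw [smul_sub, smul_smul, mul_inv_cancel₀ hl1ne, one_smul, neg_sub]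
    rw [hfac]
    refine IsUnit.neg ?_
    rw [Algebra.smul_def]
    refine (hl1ne.isUnit.map (algebraMap ℂ B)).mul ?_
    refine (Units.oneSub (l1⁻¹ • x) ?_).isUnit
    rw [norm_smul, norm_inv]
    have hl1pos : (0:ℝ) < ‖l1‖ := lt_of_le_of_lt (norm_nonneg x) hx
    exact inv_mul_lt_one₀ hl1pos |>.2 hx
  have hl1pos : (0:ℝ) < ‖l1‖ := lt_of_le_of_lt (norm_nonneg a) hl1
  have hua : IsUnit a := by simpa using hres 0 h0C
  set ua : Bˣ := hua.unit with hua'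
  set u1 : Bˣ := (hres l1 hl1C).unit with hu1'
  have hzn : ‖(0:B)‖ < ‖l1‖ := by simpa using hl1pos
  set u2 : Bˣ := (hbig 0 hzn).unit with hu2'
  have hj1 : Joined ua u1 := by
    refine joined_units _ _
      { toFun := fun t => a - (γ t) • (1:B)
        continuous_toFun := continuous_const.sub (γ.continuous.smul continuous_const)
        source' := by simp [hua']
        target' := by simp [hu1'] } (fun t => hres (γ t) (hγ t))
  have hnorm2 : ∀ t : unitInterval, ‖((1 - (t:ℝ)) • a : B)‖ < ‖l1‖ := by
    intro t
    rw [norm_smul]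
    refine lt_of_le_of_lt ?_ hl1
    rw [Real.norm_eq_abs]
    refine mul_le_of_le_one_left (norm_nonneg a) ?_
    rw [abs_le]
    constructor
    · linarith [t.2.2]
    · linarith [t.2.1]
  have hj2 : Joined u1 u2 := by
    refine joined_units _ _
      { toFun := fun t => (1 - (t:ℝ)) • a - l1 • (1:B)
        continuous_toFun := (((continuous_const.sub continuous_subtype_val).smul
          continuous_const).sub continuous_const)
        source' := by simp [hu1']
        target' := by simp [hu2'] } (fun t => hbig _ (hnorm2 t))
  let H : Subgroup Bˣ :=
  { carrier := {u | ∃ b : B, exp b = (u : B)}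
    one_mem' := ⟨0, exp_zero⟩
    mul_mem' := by
      rintro u v ⟨b, hb⟩ ⟨c, hc⟩
      exact ⟨b + c, by rw [exp_add, hb, hc, Units.val_mul]⟩
    inv_mem' := by
      rintro u ⟨b, hb⟩
      refine ⟨-b, Eq.symm (Units.inv_eq_of_mul_eq_one_left ?_)⟩
      rw [← hb, ← exp_add, neg_add_cancel, exp_zero] }
  have hHnhds : (H : Set Bˣ) ∈ nhds (1 : Bˣ) := by
    have h1 : (H : Set Bˣ) = Units.val ⁻¹' (Set.range (exp (𝔸 := B))) := by
      ext u
      constructor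
      · rintro ⟨b, hb⟩; exact ⟨b, hb⟩
      · rintro ⟨b, hb⟩; exact ⟨b, hb⟩
    rw [h1]
    exact Units.continuous_val.continuousAt.preimage_mem_nhds
      (by simpa using exp_range_nhds (B := B))
  have hHopen : IsOpen (H : Set Bˣ) := Subgroup.isOpen_of_mem_nhds H hHnhds
  have hHclopen : IsClopen (H : Set Bˣ) := ⟨H.isClosed_of_isOpen hHopen, hHopen⟩
  have hu2H : u2 ∈ H := by
    refine ⟨algebraMap ℂ B (Complex.log (-l1)), ?_⟩
    rw [← algebraMap_exp_comm, ← Complex.exp_eq_exp_ℂ, Complex.exp_log (neg_ne_zero.2 hl1ne)]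
    rw [hu2', IsUnit.unit_spec, zero_sub, Algebra.algebraMap_eq_smul_one, neg_smul]
  have hjoin : Joined u2 ua := (hj1.trans hj2).symm
  have huaH : ua ∈ H :=
    hHclopen.connectedComponent_subset hu2H (pathComponent_subset_component _ hjoin)
  obtain ⟨b, hb⟩ := huaH
  exact ⟨b, by rw [hb, hua', IsUnit.unit_spec]⟩

/-- If `A` is a unital complex Banach algebra, `a ∈ A`, and `0` belongs to the unbounded
connected component of `ℂ \ σ_A(a)`, then there exists `b ∈ A` with `e^b = a`. -/
theorem stmt4 {A : Type*} [NormedRing A] [NormOneClass A] [NormedAlgebra ℂ A]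
    [CompleteSpace A] (a : A)
    (h0 : (0 : ℂ) ∈ (spectrum ℂ a)ᶜ)
    (hunb : ¬ Bornology.IsBounded (connectedComponentIn (spectrum ℂ a)ᶜ 0)) :
    ∃ b : A, NormedSpace.exp b = a := by
  classical
  set Cen : Subalgebra ℂ A := Subalgebra.centralizer ℂ {a} with hCen
  set Bs : Subalgebra ℂ A := Subalgebra.centralizer ℂ (Cen : Set A) with hBs
  have haC : a ∈ Cen := by
    rw [hCen, Subalgebra.mem_centralizer_iff]
    rintro g hg
    rw [Set.mem_singleton_iff] at hg
    rw [hg]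
  have haB : a ∈ Bs := by
    rw [hBs, Subalgebra.mem_centralizer_iff]
    intro c hc
    exact ((Subalgebra.mem_centralizer_iff (R := ℂ)).1 hc a rfl).symm
  have hBsub : ∀ x ∈ Bs, x ∈ Cen := by
    intro x hx
    rw [hCen, Subalgebra.mem_centralizer_iff]
    rintro g hg
    rw [Set.mem_singleton_iff] at hg
    rw [hg]
    exact (Subalgebra.mem_centralizer_iff (R := ℂ)).1 hx a haC
  have hcomm : ∀ x y : ↥Bs, (x : A) * (y : A) = (y : A) * (x : A) := by
    intro x y
    exact (Subalgebra.mem_centralizer_iff (R := ℂ)).1 y.2 (x : A) (hBsub _ x.2)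
  have hclosed : IsClosed (Bs : Set A) := by
    have hset : (Bs : Set A) = ⋂ c ∈ (Cen : Set A), {x : A | c * x = x * c} := by
      ext x
      simp only [SetLike.mem_coe, hBs, Subalgebra.mem_centralizer_iff, Set.mem_iInter,
        Set.mem_setOf_eq, SetLike.mem_coe]
    rw [hset]
    exact isClosed_biInter fun c _ =>
      isClosed_eq (continuous_const.mul continuous_id) (continuous_id.mul continuous_const)
  letI : CompleteSpace ↥Bs := hclosed.completeSpace_coe
  letI : NormedCommRing ↥Bs :=
    { (inferInstance : NormedRing ↥Bs) with
      mul_comm := fun x y => Subtype.ext (hcomm x y) }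
  letI : NormOneClass ↥Bs := ⟨by
    show ‖((1 : ↥Bs) : A)‖ = 1
    rw [OneMemClass.coe_one, norm_one]⟩
  set a' : ↥Bs := ⟨a, haB⟩ with ha'
  have hinv : ∀ (x : A) (hx : x ∈ Bs), IsUnit x → IsUnit (⟨x, hx⟩ : ↥Bs) := by
    rintro x hx ⟨u, hu⟩
    have hr : (↑u⁻¹ : A) ∈ Bs := by
      rw [hBs, Subalgebra.mem_centralizer_iff]
      intro c hc
      have hxc : Commute c (↑u : A) := by
        rw [hu]
        exact (Subalgebra.mem_centralizer_iff (R := ℂ)).1 hx c hc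
      exact hxc.units_inv_right
    refine ⟨⟨⟨x, hx⟩, ⟨(↑u⁻¹ : A), hr⟩, Subtype.ext ?_, Subtype.ext ?_⟩, rfl⟩
    · show x * (↑u⁻¹ : A) = 1
      rw [← hu, Units.mul_inv]
    · show (↑u⁻¹ : A) * x = 1
      rw [← hu, Units.inv_mul]
  have hspec : spectrum ℂ a' = spectrum ℂ a := by
    ext z
    rw [spectrum.mem_iff, spectrum.mem_iff, not_iff_not]
    constructor
    · intro h
      have h2 := h.map (Bs.val)
      have h3 : Bs.val (algebraMap ℂ ↥Bs z - a') = algebraMap ℂ A z - a := by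
        rw [map_sub, AlgHom.commutes]
        rfl
      rwa [h3] at h2
    · intro h
      have hmem : algebraMap ℂ A z - a ∈ Bs := sub_mem (Subalgebra.algebraMap_mem Bs z) haB
      have h2 := hinv _ hmem h
      have h3 : (⟨algebraMap ℂ A z - a, hmem⟩ : ↥Bs) = algebraMap ℂ ↥Bs z - a' :=
        Subtype.ext rfl
      rwa [h3] at h2
  obtain ⟨b', hb'⟩ := comm_case a' (by rw [hspec]; exact h0) (by rw [hspec]; exact hunb)
  refine ⟨(b' : A), ?_⟩
  letI : NormedAlgebra ℚ A := NormedAlgebra.restrictScalars ℚ ℂ A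
  letI : NormedAlgebra ℚ ↥Bs := NormedAlgebra.restrictScalars ℚ ℂ ↥Bs
  have hmap : Bs.val (exp b') = exp (Bs.val b') :=
    map_exp Bs.val continuous_subtype_val b'
  rw [show exp (b' : A) = Bs.val (exp b') from hmap.symm, hb']
  rfl
end

section
/- Let 𝓡 be a unital real Banach algebra (not necessarily commutative) and let x ∈ 𝓡. Suppose that 0 belongs to the unbounded connected component of ℂ \ σ*_𝓡(x). Then there exists r ∈ 𝓡 such that e^r = x². -/
set_option maxHeartbeats 1000000
set_option synthInstance.maxHeartbeats 400000

/-- The real-symmetric spectrum of an element `x` of a unital real algebra `R`: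
the set of `λ ∈ ℂ` such that `x² - 2(Re λ)·x + |λ|²·1` is not invertible in `R`. -/
def realSymSpectrum {R : Type*} [Ring R] [Algebra ℝ R] (x : R) : Set ℂ :=
  {lam : ℂ | ¬ IsUnit (x ^ 2 - (2 * lam.re) • x + (‖lam‖ ^ 2) • (1 : R))}

open NormedSpace in
/-- Main analytic lemma: in a commutative real Banach algebra, if `g lam = b² - 2 Re lam • b
+ |lam|² • 1` is invertible for all `lam` in a preconnected unbounded set `K` containing `0`,
then `b²` is an exponential. -/
theorem auxMainStmt6 {B : Type*} [NormedCommRing B] [NormedAlgebra ℝ B] [CompleteSpace B]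
    {K : Set ℂ} (hK : IsPreconnected K) (h0K : (0 : ℂ) ∈ K)
    (hKunb : ∀ C : ℝ, ∃ lam ∈ K, C < ‖lam‖)
    (b : B) (g : ℂ → B)
    (hgdef : ∀ lam : ℂ, g lam = b ^ 2 - (2 * lam.re) • b + (‖lam‖ ^ 2) • 1)
    (hunit : ∀ lam ∈ K, IsUnit (g lam)) :
    ∃ r : B, NormedSpace.exp r = b ^ 2 := by
  classical
  set E : Set B := Set.range (exp : B → B) with hEdef
  -- a ball around 1 inside E, via the inverse function theorem
  have hmap : Filter.map (exp : B → B) (nhds (0 : B)) = nhds (exp (0 : B)) := by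
    have h := (hasStrictFDerivAt_exp_zero (𝕂 := ℝ) (𝔸 := B))
    have h' : HasStrictFDerivAt (exp : B → B)
        ((ContinuousLinearEquiv.refl ℝ B : B ≃L[ℝ] B) : B →L[ℝ] B) 0 := by
      exact h
    exact h'.map_nhds_eq_of_equiv
  have h1 : E ∈ nhds (1 : B) := by
    rw [hEdef, ← NormedSpace.exp_zero (𝔸 := B), ← hmap]
    exact Filter.mem_map.2 (by simp)
  obtain ⟨ε, εpos, hball⟩ := Metric.mem_nhds_iff.mp h1
  -- E is closed under multiplication and inverses
  have hEmul : ∀ u v : B, u ∈ E → v ∈ E → u * v ∈ E := by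
    rintro _ _ ⟨r, rfl⟩ ⟨s, rfl⟩
    letI : NormedAlgebra ℚ B := .restrictScalars ℚ ℝ B
    exact ⟨r + s, NormedSpace.exp_add_of_commute (mul_comm r s)⟩
  have hEinv : ∀ u ∈ E, ∃ v ∈ E, u * v = 1 := by
    rintro _ ⟨r, rfl⟩
    refine ⟨exp (-r), ⟨-r, rfl⟩, ?_⟩
    letI : NormedAlgebra ℚ B := .restrictScalars ℚ ℝ B
    rw [← NormedSpace.exp_add_of_commute (mul_comm r (-r)), add_neg_cancel,
      NormedSpace.exp_zero]
  -- membership in E is locally constant among units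
  have hstep : ∀ u v w : B, u * w = 1 → w * u = 1 → ‖w‖ * ‖v - u‖ < ε → (u ∈ E ↔ v ∈ E) := by
    intro u v w huw hwu hlt
    have hc : (w * v) ∈ E := by
      apply hball
      have h2 : w * v - 1 = w * (v - u) := by rw [mul_sub, hwu]
      rw [Metric.mem_ball, dist_eq_norm, h2]
      exact lt_of_le_of_lt (norm_mul_le _ _) hlt
    have huc : u * (w * v) = v := by rw [← mul_assoc, huw, one_mul]
    constructor
    · intro hu
      rw [← huc]
      exact hEmul _ _ hu hc
    · intro hv
      obtain ⟨c', hc', hcc'⟩ := hEinv _ hc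
      have h3 : v * c' = u := by rw [← huc, mul_assoc, hcc', mul_one]
      rw [← h3]
      exact hEmul _ _ hv hc'
  have hgc : Continuous g := by
    have : g = fun lam : ℂ => b ^ 2 - (2 * lam.re) • b + (‖lam‖ ^ 2) • 1 :=
      funext hgdef
    rw [this]
    refine Continuous.add (Continuous.sub continuous_const ?_) ?_
    · exact ((continuous_const.mul Complex.continuous_re)).smul continuous_const
    · exact ((continuous_norm.pow 2)).smul continuous_const
  -- a far away point of K whose image is an exponential
  have hfar : ∃ lam ∈ K, g lam ∈ E := by
    obtain ⟨ε', hε'pos, hε'le, hε'le1⟩ : ∃ t : ℝ, 0 < t ∧ t ≤ ε ∧ t ≤ 1 :=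
      ⟨min ε 1, lt_min εpos one_pos, min_le_left _ _, min_le_right _ _⟩
    obtain ⟨na, hna0, hnaeq⟩ : ∃ t : ℝ, 0 ≤ t ∧ ‖b‖ = t := ⟨‖b‖, norm_nonneg _, rfl⟩
    obtain ⟨lam, hlamK, hlam⟩ := hKunb ((na ^ 2 + 2 * na) / ε' + 1)
    obtain ⟨m, hmeq, hm1, hmlt⟩ :
        ∃ m : ℝ, ‖lam‖ = m ∧ 1 ≤ m ∧ (na ^ 2 + 2 * na) / ε' + 1 < m := by
      refine ⟨‖lam‖, rfl, ?_, ?_⟩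
      · have h2 : (0:ℝ) ≤ (na ^ 2 + 2 * na) / ε' := by positivity
        have h3 := hlam
        linarith
      · have h3 := hlam
        exact h3
    have hm2pos : (0 : ℝ) < m ^ 2 := by positivity
    have hqlt : na ^ 2 + 2 * na ≤ ε' * (m - 1) := by
      have h4 : (na ^ 2 + 2 * na) / ε' ≤ m - 1 := by linarith
      have h5 := (div_le_iff₀ hε'pos).mp h4
      linarith
    obtain ⟨y, hy⟩ : ∃ y : B, y = b ^ 2 - (2 * lam.re) • b := ⟨_, rfl⟩
    obtain ⟨w, hw⟩ : ∃ w : B, w = (m ^ 2)⁻¹ • y := ⟨_, rfl⟩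
    have hwnorm : ‖w‖ < ε' := by
      have hy1 : ‖y‖ ≤ na ^ 2 + 2 * m * na := by
        have ha2 : ‖b ^ 2‖ ≤ na ^ 2 := by
          rw [pow_two, pow_two, ← hnaeq]
          exact norm_mul_le b b
        have hsa : ‖(2 * lam.re) • b‖ = |2 * lam.re| * na := by
          rw [norm_smul, Real.norm_eq_abs, hnaeq]
        have hre : |2 * lam.re| ≤ 2 * m := by
          rw [abs_mul, abs_two]
          have h5 := Complex.abs_re_le_norm lam
          rw [hmeq] at h5
          nlinarith [abs_nonneg lam.re]
        calc ‖y‖ ≤ ‖b ^ 2‖ + ‖(2 * lam.re) • b‖ := hy ▸ norm_sub_le _ _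
          _ ≤ na ^ 2 + 2 * m * na := by rw [hsa]; nlinarith
      have hw1 : ‖w‖ ≤ (m ^ 2)⁻¹ * (na ^ 2 + 2 * m * na) := by
        rw [hw, norm_smul, Real.norm_eq_abs, abs_of_pos (by positivity)]
        exact mul_le_mul_of_nonneg_left hy1 (by positivity)
      refine lt_of_le_of_lt hw1 ?_
      rw [inv_mul_eq_div, div_lt_iff₀ hm2pos]
      nlinarith
    have hfl : g lam = ((m ^ 2) • (1 : B)) * (1 + w) := by
      rw [smul_mul_assoc, one_mul, smul_add, hw, smul_smul,
        mul_inv_cancel₀ (ne_of_gt hm2pos), one_smul, hgdef lam, hmeq, hy]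
      abel
    have h1w : (1 + w) ∈ E := by
      apply hball
      rw [Metric.mem_ball, dist_eq_norm]
      simpa using lt_of_lt_of_le hwnorm hε'le
    have hsm : ((m ^ 2) • (1 : B)) ∈ E := by
      refine ⟨algebraMap ℝ B (Real.log (m ^ 2)), ?_⟩
      rw [← NormedSpace.algebraMap_exp_comm, ← Real.exp_eq_exp_ℝ, Real.exp_log hm2pos,
        Algebra.algebraMap_eq_smul_one]
    exact ⟨lam, hlamK, hfl ▸ hEmul _ _ hsm h1w⟩
  -- local constancy of `g · ∈ E` on K
  have hloc : ∀ lam ∈ K, ∃ δ > 0, ∀ μ : ℂ, dist μ lam < δ → (g lam ∈ E ↔ g μ ∈ E) := by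
    intro lam hlam
    obtain ⟨U, hU⟩ := hunit lam hlam
    obtain ⟨w, hwdef⟩ : ∃ w : B, w = ↑U⁻¹ := ⟨_, rfl⟩
    have hpos : (0 : ℝ) < ε / (‖w‖ + 1) := by positivity
    obtain ⟨δ, hδpos, hδ⟩ := Metric.continuousAt_iff.mp hgc.continuousAt _ hpos
    refine ⟨δ, hδpos, fun μ hμ => ?_⟩
    have hdist := hδ hμ
    refine hstep (g lam) (g μ) w ?_ ?_ ?_
    · rw [hwdef, ← hU]; exact U.mul_inv
    · rw [hwdef, ← hU]; exact U.inv_mul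
    · rw [dist_eq_norm] at hdist
      have h1' : ‖w‖ * ‖g μ - g lam‖ ≤ ‖w‖ * (ε / (‖w‖ + 1)) :=
        mul_le_mul_of_nonneg_left (le_of_lt hdist) (norm_nonneg w)
      refine lt_of_le_of_lt h1' ?_
      rw [mul_div_assoc', div_lt_iff₀ (by positivity)]
      nlinarith [norm_nonneg w, εpos]
  choose δ hδpos hδ using hloc
  -- connectedness argument
  have hgoal : g 0 ∈ E := by
    by_contra hnot
    set U1 : Set ℂ := ⋃ (lam : ℂ) (hl : lam ∈ K) (_ : g lam ∈ E), Metric.ball lam (δ lam hl)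
      with hU1
    set U2 : Set ℂ := ⋃ (lam : ℂ) (hl : lam ∈ K) (_ : g lam ∉ E), Metric.ball lam (δ lam hl)
      with hU2
    have hU1open : IsOpen U1 := by
      apply isOpen_iUnion; intro lam; apply isOpen_iUnion; intro hl; apply isOpen_iUnion
      intro _; exact Metric.isOpen_ball
    have hU2open : IsOpen U2 := by
      apply isOpen_iUnion; intro lam; apply isOpen_iUnion; intro hl; apply isOpen_iUnion
      intro _; exact Metric.isOpen_ball
    have hcover : K ⊆ U1 ∪ U2 := by
      intro lam hl
      by_cases hfl : g lam ∈ E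
      · left
        exact Set.mem_iUnion.2 ⟨lam, Set.mem_iUnion.2 ⟨hl, Set.mem_iUnion.2
          ⟨hfl, Metric.mem_ball_self (hδpos lam hl)⟩⟩⟩
      · right
        exact Set.mem_iUnion.2 ⟨lam, Set.mem_iUnion.2 ⟨hl, Set.mem_iUnion.2
          ⟨hfl, Metric.mem_ball_self (hδpos lam hl)⟩⟩⟩
    obtain ⟨lam₀, hlam₀K, hlam₀E⟩ := hfar
    have hne1 : (K ∩ U1).Nonempty :=
      ⟨lam₀, hlam₀K, Set.mem_iUnion.2 ⟨lam₀, Set.mem_iUnion.2 ⟨hlam₀K, Set.mem_iUnion.2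
        ⟨hlam₀E, Metric.mem_ball_self (hδpos lam₀ hlam₀K)⟩⟩⟩⟩
    have hne2 : (K ∩ U2).Nonempty :=
      ⟨0, h0K, Set.mem_iUnion.2 ⟨0, Set.mem_iUnion.2 ⟨h0K, Set.mem_iUnion.2
        ⟨hnot, Metric.mem_ball_self (hδpos 0 h0K)⟩⟩⟩⟩
    obtain ⟨μ, _, hμ1, hμ2⟩ := hK U1 U2 hU1open hU2open hcover hne1 hne2
    obtain ⟨l1, hl1⟩ := Set.mem_iUnion.1 hμ1
    obtain ⟨hl1K, hl1'⟩ := Set.mem_iUnion.1 hl1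
    obtain ⟨hl1E, hl1b⟩ := Set.mem_iUnion.1 hl1'
    obtain ⟨l2, hl2⟩ := Set.mem_iUnion.1 hμ2
    obtain ⟨hl2K, hl2'⟩ := Set.mem_iUnion.1 hl2
    obtain ⟨hl2E, hl2b⟩ := Set.mem_iUnion.1 hl2'
    have e1 : g μ ∈ E := (hδ l1 hl1K μ (Metric.mem_ball.mp hl1b)).mp hl1E
    have e2 : g μ ∉ E := fun h => hl2E ((hδ l2 hl2K μ (Metric.mem_ball.mp hl2b)).mpr h)
    exact e2 e1
  have hg0 : g 0 = b ^ 2 := by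
    rw [hgdef 0]
    simp
  rw [hg0] at hgoal
  exact hgoal

/-- If `𝓡` is a unital real Banach algebra, `x ∈ 𝓡`, and `0` belongs to the unbounded
connected component of `ℂ \ σ*_𝓡(x)`, then there exists `r ∈ 𝓡` with `e^r = x²`. -/
theorem stmt6 {R : Type*} [NormedRing R] [NormOneClass R] [NormedAlgebra ℝ R]
    [CompleteSpace R] (x : R)
    (h0 : (0 : ℂ) ∈ (realSymSpectrum x)ᶜ)
    (hunb : ¬ Bornology.IsBounded (connectedComponentIn (realSymSpectrum x)ᶜ 0)) :
    ∃ r : R, NormedSpace.exp r = x ^ 2 := by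
  classical
  set A : Subalgebra ℝ R := Subalgebra.centralizer ℝ (Set.centralizer {x}) with hA
  have hxmem : x ∈ A := by
    rw [hA, Subalgebra.mem_centralizer_iff]
    intro g hg
    exact (hg x rfl).symm
  have hclosed : IsClosed (A : Set R) := by
    have h2 : (A : Set R) = ⋂ c ∈ Set.centralizer ({x} : Set R), {a : R | c * a = a * c} := by
      ext a
      simp [hA, Subalgebra.mem_centralizer_iff, Set.mem_centralizer_iff]
    rw [h2]
    exact isClosed_biInter fun c _ => isClosed_eq (continuous_const.mul continuous_id)
      (continuous_id.mul continuous_const)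
  haveI : CompleteSpace ↥A := hclosed.completeSpace_coe
  -- commutativity of A
  have hcomm : ∀ u v : ↥A, u * v = v * u := by
    intro u v
    have hv : (v : R) ∈ Set.centralizer ({x} : Set R) := by
      intro m hm
      rcases hm with rfl
      exact (Subalgebra.mem_centralizer_iff ℝ |>.mp v.2) m (fun n hn => by rcases hn with rfl; rfl)
    ext
    push_cast
    exact ((Subalgebra.mem_centralizer_iff ℝ |>.mp u.2) _ hv).symm
  letI : NormedCommRing ↥A := { (inferInstance : NormedRing ↥A) with mul_comm := hcomm }
  -- inverse closedness
  have hunitA : ∀ u : ↥A, IsUnit (u : R) → IsUnit u := by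
    intro u hu
    set b : R := ↑hu.unit⁻¹ with hb
    have hb1 : (u : R) * b = 1 := hu.unit.mul_inv
    have hb2 : b * (u : R) = 1 := hu.unit.inv_mul
    have hbA : b ∈ A := by
      rw [hA, Subalgebra.mem_centralizer_iff]
      intro g hg
      have hga : g * (u : R) = (u : R) * g := (Subalgebra.mem_centralizer_iff ℝ |>.mp u.2) g hg
      have e1 : b * ((u : R) * g) * b = g * b := by rw [← mul_assoc, hb2, one_mul]
      have e2 : b * (g * (u : R)) * b = b * g := by
        rw [← mul_assoc, mul_assoc (b * g), hb1, mul_one]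
      rw [← e1, ← hga, e2]
    exact ⟨⟨u, ⟨b, hbA⟩, Subtype.ext hb1, Subtype.ext hb2⟩, rfl⟩
  -- set up and apply the main lemma
  have h0' : (0 : ℂ) ∈ connectedComponentIn (realSymSpectrum x)ᶜ 0 := mem_connectedComponentIn h0
  have hKsub : connectedComponentIn (realSymSpectrum x)ᶜ 0 ⊆ (realSymSpectrum x)ᶜ :=
    connectedComponentIn_subset _ _
  have hKconn : IsPreconnected (connectedComponentIn (realSymSpectrum x)ᶜ 0) :=
    isPreconnected_connectedComponentIn
  have hKunb : ∀ C : ℝ, ∃ lam ∈ connectedComponentIn (realSymSpectrum x)ᶜ 0, C < ‖lam‖ := by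
    intro C
    by_contra h
    push_neg at h
    exact hunb (isBounded_iff_forall_norm_le.mpr ⟨C, h⟩)
  obtain ⟨r, hr⟩ := auxMainStmt6 (B := ↥A) hKconn h0' hKunb ⟨x, hxmem⟩
    (fun lam => ⟨x, hxmem⟩ ^ 2 - (2 * lam.re) • ⟨x, hxmem⟩ + (‖lam‖ ^ 2) • 1)
    (fun _ => rfl)
    (by
      intro lam hl
      apply hunitA
      have h2 := hKsub hl
      simp only [realSymSpectrum, Set.mem_compl_iff, Set.mem_setOf_eq, not_not] at h2
      have hcoe : ((⟨x, hxmem⟩ ^ 2 - (2 * lam.re) • (⟨x, hxmem⟩ : ↥A)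
          + (‖lam‖ ^ 2) • 1 : ↥A) : R)
          = x ^ 2 - (2 * lam.re) • x + (‖lam‖ ^ 2) • (1 : R) := by
        push_cast
        rfl
      rw [hcoe]
      exact h2)
  refine ⟨(r : R), ?_⟩
  have hmap2 : A.val (NormedSpace.exp r) = NormedSpace.exp (A.val r) :=
    letI : NormedAlgebra ℚ ↥A := .restrictScalars ℚ ℝ ↥A
    letI : NormedAlgebra ℚ R := .restrictScalars ℚ ℝ R
    NormedSpace.map_exp A.val continuous_subtype_val r
  calc NormedSpace.exp (r : R) = A.val (NormedSpace.exp r) := hmap2.symm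
    _ = ((⟨x, hxmem⟩ ^ 2 : ↥A) : R) := by rw [hr]; rfl
    _ = x ^ 2 := by push_cast; rfl
end

section
/- Let 𝓡 be a unital real Banach algebra (not necessarily commutative) and let x ∈ 𝓡. Suppose that 0 belongs to the unbounded connected component of ℂ \ σ*_𝓡(x). Then x ∈ exp 𝓡 if and only if x = y² for some y ∈ 𝓡. -/
open NormedSpace Set Topology unitInterval

lemma exp_near_one {B : Type*} [NormedRing B] [NormedAlgebra ℝ B] [CompleteSpace B] :
    ∃ ε > 0, ∀ c : B, ‖c - 1‖ < ε → ∃ ℓ : B, NormedSpace.exp ℓ = c := by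
  have h : HasStrictFDerivAt (exp : B → B) ((ContinuousLinearEquiv.refl ℝ B : B ≃L[ℝ] B) : B →L[ℝ] B) 0 :=
    hasStrictFDerivAt_exp_zero
  have hmap := h.map_nhds_eq_of_equiv
  rw [exp_zero] at hmap
  have hr : range (exp : B → B) ∈ 𝓝 (1 : B) := by
    rw [← hmap]
    simpa [Set.image_univ] using Filter.image_mem_map (Filter.univ_mem (f := 𝓝 (0:B)))
  obtain ⟨ε, hε, hball⟩ := Metric.mem_nhds_iff.mp hr
  exact ⟨ε, hε, fun c hc => hball (by simpa [dist_eq_norm] using hc)⟩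


lemma exp_rot {B : Type*} [NormedRing B] [NormedAlgebra ℝ B] [CompleteSpace B]
    (p u : B) (hu : u * u = -p) (hup : u * p = u) :
    NormedSpace.exp (Real.pi • u) = 1 - (2:ℝ) • p := by
  letI : NormedAlgebra ℚ B := .restrictScalars ℚ ℝ B
  set c : ℝ → B := fun θ => (1 - p) + Real.cos θ • p + Real.sin θ • u with hc
  have hder : ∀ θ : ℝ, HasDerivAt (fun t => exp (t • (-u)) * c t) 0 θ := by
    intro θ
    have h1 : HasDerivAt (fun t : ℝ => exp (t • (-u))) (exp (θ • (-u)) * (-u)) θ :=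
      hasDerivAt_exp_smul_const (-u) θ
    have h2 : HasDerivAt c ((-Real.sin θ) • p + Real.cos θ • u) θ := by
      have hcos : HasDerivAt (fun t : ℝ => Real.cos t • p) ((-Real.sin θ) • p) θ :=
        (Real.hasDerivAt_cos θ).smul_const p
      have hsin : HasDerivAt (fun t : ℝ => Real.sin t • u) (Real.cos θ • u) θ :=
        (Real.hasDerivAt_sin θ).smul_const u
      exact ((hcos.const_add (1 - p)).add hsin)
    have h3 := h1.mul h2
    refine h3.congr_deriv (Eq.symm ?_)
    have hrel : (-u) * c θ + ((-Real.sin θ) • p + Real.cos θ • u) = 0 := by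
      simp only [hc, neg_mul, mul_add, mul_sub, mul_one, mul_smul_comm, hup, hu]
      simp only [neg_neg, smul_neg, neg_smul]
      abel
    calc (0:B) = exp (θ • (-u)) * ((-u) * c θ + ((-Real.sin θ) • p + Real.cos θ • u)) := by
          rw [hrel, mul_zero]
      _ = exp (θ • (-u)) * (-u) * c θ + exp (θ • (-u)) * ((-Real.sin θ) • p + Real.cos θ • u) := by
          rw [mul_add, mul_assoc]
  have hconst : ∀ θ : ℝ, exp (θ • (-u)) * c θ = exp ((0:ℝ) • (-u)) * c 0 := by
    intro θ
    have hdiff : Differentiable ℝ (fun t => exp (t • (-u)) * c t) :=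
      fun t => (hder t).differentiableAt
    exact is_const_of_deriv_eq_zero hdiff (fun t => (hder t).deriv) θ 0
  have h0 : exp ((0:ℝ) • (-u)) * c 0 = 1 := by
    simp [hc, exp_zero]
  -- exp(θ • u) * exp(θ • (-u)) = 1
  have hinv : ∀ θ : ℝ, exp (θ • u) * exp (θ • (-u)) = 1 := by
    intro θ
    rw [← exp_add_of_commute]
    · simp [exp_zero]
    · exact Commute.smul_left (Commute.smul_right (Commute.neg_right rfl) θ) θ
  have : c Real.pi = exp (Real.pi • u) := by
    have h1 : exp (Real.pi • (-u)) * c Real.pi = 1 := (hconst Real.pi).trans h0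
    calc c Real.pi = (exp (Real.pi • u) * exp (Real.pi • (-u))) * c Real.pi := by
          rw [hinv, one_mul]
      _ = exp (Real.pi • u) * (exp (Real.pi • (-u)) * c Real.pi) := by rw [mul_assoc]
      _ = exp (Real.pi • u) := by rw [h1, mul_one]
  rw [← this]
  simp [hc, Real.cos_pi, Real.sin_pi]
  module

lemma exp_chain {B : Type*} [NormedCommRing B] [NormedAlgebra ℝ B] [CompleteSpace B]
    (g : unitInterval → B) (hg : Continuous g) (hu : ∀ t, IsUnit (g t)) :
    ∃ ℓ : B, g 1 = NormedSpace.exp ℓ * g 0 := by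
  letI : NormedAlgebra ℚ B := .restrictScalars ℚ ℝ B
  obtain ⟨ε, hε, hexp⟩ := exp_near_one (B := B)
  -- local statement
  have hloc : ∀ t₀ : unitInterval, ∃ V ∈ 𝓝 t₀, ∀ t ∈ V, ∃ c : B, g t = exp c * g t₀ := by
    intro t₀
    set w := (hu t₀).unit with hw
    have hinvn : (0:ℝ) < ‖(↑w⁻¹ : B)‖ + 1 := by positivity
    have hcont : ContinuousAt g t₀ := hg.continuousAt
    have hV : g ⁻¹' (Metric.ball (g t₀) (ε / (‖(↑w⁻¹ : B)‖ + 1))) ∈ 𝓝 t₀ :=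
      hcont (Metric.ball_mem_nhds _ (by positivity))
    refine ⟨_, hV, fun t ht => ?_⟩
    have hdist : ‖g t - g t₀‖ < ε / (‖(↑w⁻¹ : B)‖ + 1) := by
      simpa [dist_eq_norm] using ht
    have hm : ‖g t * ↑w⁻¹ - 1‖ < ε := by
      have h1 : g t * ↑w⁻¹ - 1 = (g t - g t₀) * ↑w⁻¹ := by
        rw [sub_mul]
        congr 1
        have : (g t₀) * ↑w⁻¹ = 1 := by
          rw [show g t₀ = (w : B) from rfl]; exact w.mul_inv
        rw [this]
      rw [h1]
      calc ‖(g t - g t₀) * ↑w⁻¹‖ ≤ ‖g t - g t₀‖ * ‖(↑w⁻¹ : B)‖ := norm_mul_le _ _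
        _ ≤ ‖g t - g t₀‖ * (‖(↑w⁻¹ : B)‖ + 1) := by
            have := norm_nonneg (g t - g t₀); nlinarith [norm_nonneg (↑w⁻¹ : B)]
        _ < ε / (‖(↑w⁻¹ : B)‖ + 1) * (‖(↑w⁻¹ : B)‖ + 1) := by
            apply mul_lt_mul_of_pos_right hdist hinvn
        _ = ε := div_mul_cancel₀ _ (ne_of_gt hinvn)
    obtain ⟨c, hc⟩ := hexp _ hm
    refine ⟨c, ?_⟩
    rw [hc]
    calc g t = g t * (↑w⁻¹ * ↑w) := by rw [w.inv_mul, mul_one]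
      _ = g t * ↑w⁻¹ * g t₀ := by rw [← mul_assoc]; rfl
  set S : Set unitInterval := {t | ∃ ℓ : B, g t = exp ℓ * g 0} with hS
  have hS0 : (0 : unitInterval) ∈ S := ⟨0, by rw [exp_zero, one_mul]⟩
  have hopen : IsOpen S := by
    rw [isOpen_iff_mem_nhds]
    rintro t₀ ⟨ℓ, hℓ⟩
    obtain ⟨V, hV, hVp⟩ := hloc t₀
    filter_upwards [hV] with t ht
    obtain ⟨c, hcv⟩ := hVp t ht
    exact ⟨c + ℓ, by rw [hcv, hℓ, exp_add, mul_assoc]⟩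
  have hclosed : IsClosed S := by
    rw [← closure_subset_iff_isClosed]
    intro t₀ ht₀
    obtain ⟨V, hV, hVp⟩ := hloc t₀
    obtain ⟨t, htV, ℓ, hℓ⟩ := mem_closure_iff_nhds.mp ht₀ V hV
    obtain ⟨c, hcv⟩ := hVp t htV
    have : g t₀ = exp (-c) * g t := by
      rw [hcv, ← mul_assoc, ← exp_add, neg_add_cancel, exp_zero, one_mul]
    exact ⟨ℓ + -c, by rw [this, hℓ, ← mul_assoc, ← exp_add, add_comm]⟩
  have := (IsClopen.eq_univ ⟨hclosed, hopen⟩ ⟨_, hS0⟩ : S = univ)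
  have h1 : (1 : unitInterval) ∈ S := this ▸ mem_univ _
  obtain ⟨ℓ, hℓ⟩ := h1
  exact ⟨ℓ, hℓ⟩

theorem key {B : Type*} [NormedCommRing B] [NormedAlgebra ℝ B] [CompleteSpace B]
    (y : B)
    (hpath : ∀ C : ℝ, ∃ lam1 : ℂ, C ≤ ‖lam1‖ ∧
      JoinedIn {lam : ℂ | IsUnit ((y^2)^2 - (2*lam.re) • (y^2) + (‖lam‖^2) • (1:B))}
        0 lam1) :
    ∃ a : B, NormedSpace.exp a = y ^ 2 := by
  letI : NormedAlgebra ℚ B := .restrictScalars ℚ ℝ B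
  obtain ⟨ε, hε, hexp⟩ := exp_near_one (B := B)
  set x := y ^ 2 with hx
  set n := ‖x‖ with hn
  obtain ⟨lam1, hC, hjoin⟩ := hpath (max 1 ((n^2 + 2*n)/ε + 1))
  set ρ := ‖lam1‖ with hρ
  have hρ1 : (1:ℝ) ≤ ρ := le_trans (le_max_left _ _) hC
  have hρ0 : (0:ℝ) < ρ := lt_of_lt_of_le one_pos hρ1
  have hρbig : (n^2 + 2*n)/ε + 1 ≤ ρ := le_trans (le_max_right _ _) hC
  obtain ⟨γ, hγ⟩ := hjoin
  set Q : ℂ → B := fun lam => x^2 - (2*lam.re) • x + (‖lam‖^2) • (1:B) with hQ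
  have hQc : Continuous Q := by
    apply Continuous.add
    · apply Continuous.sub continuous_const
      exact ((continuous_const.mul Complex.continuous_re)).smul continuous_const
    · exact ((continuous_norm.pow 2)).smul continuous_const
  obtain ⟨ℓ, hℓ⟩ := exp_chain (fun t => Q (γ t)) (hQc.comp γ.continuous) (fun t => hγ t)
  have hg0 : Q (γ 0) = x^2 := by
    rw [γ.source]
    simp [hQ]
  have hg1 : Q (γ 1) = x^2 - (2*lam1.re) • x + (ρ^2) • (1:B) := by rw [γ.target]
  -- decompose Q lam1
  set d : B := ((ρ^2)⁻¹ : ℝ) • (x^2 - (2*lam1.re) • x) with hd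
  have hρ2 : (0:ℝ) < ρ^2 := by positivity
  have hdecomp : Q (γ 1) = (ρ^2 : ℝ) • ((1:B) + d) := by
    rw [hg1, smul_add, hd, smul_smul, mul_inv_cancel₀ (ne_of_gt hρ2), one_smul]
    abel
  have hxsq : ‖x^2‖ ≤ n^2 := by
    rw [pow_two, pow_two]; exact norm_mul_le x x
  have hre : |2*lam1.re| ≤ 2*ρ := by
    rw [abs_mul]
    simp only [Nat.abs_ofNat]
    have := Complex.abs_re_le_norm lam1
    nlinarith [abs_nonneg lam1.re]
  have hdn : ‖d‖ < ε := by
    have h1 : ‖x^2 - (2*lam1.re) • x‖ ≤ n^2 + 2*ρ*n := by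
      calc ‖x^2 - (2*lam1.re) • x‖ ≤ ‖x^2‖ + ‖(2*lam1.re) • x‖ := norm_sub_le _ _
        _ ≤ n^2 + 2*ρ*n := by
            rw [norm_smul]
            have : ‖(2*lam1.re : ℝ)‖ ≤ 2*ρ := by rwa [Real.norm_eq_abs]
            have hn0 : (0:ℝ) ≤ n := norm_nonneg x
            nlinarith
    have h2 : ‖d‖ ≤ (ρ^2)⁻¹ * (n^2 + 2*ρ*n) := by
      rw [hd, norm_smul, Real.norm_eq_abs, abs_of_pos (inv_pos.mpr hρ2)]
      exact mul_le_mul_of_nonneg_left h1 (le_of_lt (inv_pos.mpr hρ2))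
    have hn0 : (0:ℝ) ≤ n := norm_nonneg x
    have hεnum : n^2 + 2*n < ε * ρ := by
      nlinarith [mul_le_mul_of_nonneg_left hρbig hε.le, mul_div_cancel₀ (n^2+2*n) (ne_of_gt hε)]
    calc ‖d‖ ≤ (ρ^2)⁻¹ * (n^2 + 2*ρ*n) := h2
      _ < ε := by
          rw [inv_mul_lt_iff₀ hρ2]
          nlinarith
  obtain ⟨ld, hld⟩ := hexp (1 + d) (by simpa using hdn)
  -- scalar part
  have hscal : NormedSpace.exp ((Real.log (ρ^2)) • (1:B)) = (ρ^2 : ℝ) • (1:B) := by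
    rw [← Algebra.algebraMap_eq_smul_one, ← Algebra.algebraMap_eq_smul_one,
      ← algebraMap_exp_comm, ← Real.exp_eq_exp_ℝ, Real.exp_log hρ2]
  -- x^2 = exp b
  set b : B := -ℓ + (Real.log (ρ^2)) • (1:B) + ld with hb
  have hxb : NormedSpace.exp b = x^2 := by
    have h1 : Q (γ 1) = exp ((Real.log (ρ^2)) • (1:B)) * exp ld := by
      rw [hscal, hld, hdecomp, smul_mul_assoc, one_mul]
    have h2 := hℓ
    rw [h1, hg0] at h2
    -- exp ℓ * x^2 = exp lr * exp ld  → x^2 = exp(-ℓ) * ...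
    have h3 : x^2 = exp (-ℓ) * (exp ((Real.log (ρ^2)) • (1:B)) * exp ld) := by
      rw [h2, ← mul_assoc, ← exp_add, neg_add_cancel, exp_zero, one_mul]
    rw [hb, exp_add, exp_add, h3, mul_assoc]
  -- build v
  set v : B := y * exp ((-(4⁻¹:ℝ)) • b) with hv
  have hv4 : v^4 = 1 := by
    have he4 : (exp ((-(4⁻¹:ℝ)) • b))^4 = exp (-b) := by
      rw [← exp_nsmul]
      congr 1
      rw [← Nat.cast_smul_eq_nsmul ℝ, smul_smul]
      norm_num
    rw [hv, mul_pow, he4]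
    have hy4 : y^4 = x^2 := by rw [hx, ← pow_mul]
    rw [hy4, ← hxb, ← exp_add, add_neg_cancel, exp_zero]
  set A : B := 1 - v^2 with hA
  set U : B := v - v^3 with hU
  set p : B := (2⁻¹:ℝ) • A with hp
  set u : B := (2⁻¹:ℝ) • U with hu
  have hAA : A * A = A + A := by
    rw [hA]; linear_combination hv4
  have hUU : U * U = -(A + A) := by
    rw [hU, hA]; linear_combination (v^2 - 2) * hv4
  have hUA : U * A = U + U := by
    rw [hU, hA]; linear_combination v * hv4
  have huu : u * u = -p := by
    rw [hu, hp, smul_mul_smul_comm, hUU]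
    module
  have hup : u * p = u := by
    rw [hu, hp, smul_mul_smul_comm, hUA]
    module
  have hrot : exp (Real.pi • u) = v^2 := by
    rw [exp_rot p u huu hup, hp, smul_smul]
    norm_num [hA]
  refine ⟨Real.pi • u + (2⁻¹:ℝ) • b, ?_⟩
  rw [exp_add, hrot, hv, mul_pow, ← exp_nsmul]
  have h24 : (2:ℕ) • ((-(4⁻¹:ℝ)) • b) = (-(2⁻¹:ℝ)) • b := by
    rw [← Nat.cast_smul_eq_nsmul ℝ, smul_smul]
    norm_num
  rw [h24, mul_assoc, ← exp_add]
  have : (-(2⁻¹:ℝ)) • b + (2⁻¹:ℝ) • b = 0 := by module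
  rw [this, exp_zero, mul_one]

/-- If `𝓡` is a unital real Banach algebra, `x ∈ 𝓡`, and `0` belongs to the unbounded
connected component of `ℂ \ σ*_𝓡(x)`, then `x ∈ exp 𝓡` iff `x = y²` for some `y ∈ 𝓡`. -/
theorem stmt8 {R : Type*} [NormedRing R] [NormOneClass R] [NormedAlgebra ℝ R]
    [CompleteSpace R] (x : R)
    (h0 : (0 : ℂ) ∈ (realSymSpectrum x)ᶜ)
    (hunb : ¬ Bornology.IsBounded (connectedComponentIn (realSymSpectrum x)ᶜ 0)) :
    (∃ a : R, NormedSpace.exp a = x) ↔ (∃ y : R, x = y ^ 2) := by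
  letI : NormedAlgebra ℚ R := .restrictScalars ℚ ℝ R
  constructor
  · rintro ⟨a, ha⟩
    refine ⟨exp ((2⁻¹:ℝ) • a), ?_⟩
    rw [← exp_nsmul, ← Nat.cast_smul_eq_nsmul ℝ, smul_smul, ← ha]
    norm_num
  · rintro ⟨y, hy⟩
    -- the commutative closed subalgebra
    set S : Subalgebra ℝ R := Subalgebra.centralizer ℝ (Set.centralizer {y}) with hSdef
    have hyy : y ∈ Set.centralizer {y} := fun m hm => by rw [mem_singleton_iff] at hm; rw [hm]
    have hyS : y ∈ S := by
      rw [hSdef, Subalgebra.mem_centralizer_iff]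
      intro c hc
      exact (hc y (mem_singleton y)).symm
    have hxS : x ∈ S := by rw [hy]; exact pow_mem hyS 2
    -- commutativity
    have hcomm : ∀ a b : ↥S, a * b = b * a := by
      intro a b
      have hbc : (b : R) ∈ Set.centralizer {y} := by
        intro m hm
        rw [mem_singleton_iff] at hm
        rw [hm]
        exact Subalgebra.mem_centralizer_iff ℝ |>.mp b.2 y hyy
      have := Subalgebra.mem_centralizer_iff ℝ |>.mp a.2 (b : R) hbc
      refine Subtype.ext ?_
      push_cast
      exact this.symm
    have hSclosed : IsClosed (S : Set R) := by
      have : (S : Set R) = ⋂ c ∈ Set.centralizer {y}, {z : R | c * z = z * c} := by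
        ext z
        simp only [SetLike.mem_coe, hSdef, Subalgebra.mem_centralizer_iff, mem_iInter, mem_setOf_eq]
      rw [this]
      exact isClosed_biInter fun c _ =>
        isClosed_eq (continuous_const.mul continuous_id) (continuous_id.mul continuous_const)
    letI : CompleteSpace ↥S := hSclosed.completeSpace_coe
    letI instCommS : NormedCommRing ↥S :=
      { (inferInstance : NormedRing ↥S) with mul_comm := hcomm }
    set yS : ↥S := ⟨y, hyS⟩ with hyS'
    -- unit transfer
    have hunit : ∀ lam : ℂ, lam ∈ (realSymSpectrum x)ᶜ →
        IsUnit ((yS^2)^2 - (2*lam.re) • (yS^2) + (‖lam‖^2) • (1:↥S)) := by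
      intro lam hlam
      have hQmem : ((yS^2)^2 - (2*lam.re) • (yS^2) + (‖lam‖^2) • (1:↥S) : ↥S).1
          = x ^ 2 - (2 * lam.re) • x + (‖lam‖ ^ 2) • (1 : R) := by
        push_cast
        rw [hy]
      have hRunit : IsUnit (x ^ 2 - (2 * lam.re) • x + (‖lam‖ ^ 2) • (1 : R)) := by
        simpa [realSymSpectrum] using hlam
      set QR := x ^ 2 - (2 * lam.re) • x + (‖lam‖ ^ 2) • (1 : R) with hQR
      obtain ⟨w, hw⟩ := hRunit
      set z : R := ↑w⁻¹ with hz
      have hwz : QR * z = 1 := by rw [← hw, hz]; exact w.mul_inv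
      have hzw : z * QR = 1 := by rw [← hw, hz]; exact w.inv_mul
      -- z ∈ S
      have hQS : QR ∈ S := by
        rw [← hQmem]; exact ((yS^2)^2 - (2*lam.re) • (yS^2) + (‖lam‖^2) • (1:↥S)).2
      have hzS : z ∈ S := by
        rw [hSdef, Subalgebra.mem_centralizer_iff]
        intro c hc
        have hcQ : c * QR = QR * c := by
          rw [hSdef, Subalgebra.mem_centralizer_iff] at hQS
          exact hQS c hc
        have step1 : z * (QR * c) * z = c * z := by rw [← mul_assoc, hzw, one_mul]
        have step2 : z * (c * QR) * z = z * c := by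
          rw [mul_assoc z (c * QR) z, mul_assoc c QR z, hwz, mul_one]
        calc c * z = z * (QR * c) * z := step1.symm
          _ = z * (c * QR) * z := by rw [hcQ]
          _ = z * c := step2
      rw [isUnit_iff_exists]
      refine ⟨⟨z, hzS⟩, ?_, ?_⟩
      · exact Subtype.ext (by rw [Subalgebra.coe_mul, hQmem]; exact hwz)
      · exact Subtype.ext (by rw [Subalgebra.coe_mul, hQmem]; exact hzw)
    -- openness & path
    have hUopen : IsOpen ((realSymSpectrum x)ᶜ) := by
      have : (realSymSpectrum x)ᶜ =
          (fun lam : ℂ => x ^ 2 - (2 * lam.re) • x + (‖lam‖ ^ 2) • (1 : R)) ⁻¹'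
            {z : R | IsUnit z} := by
        ext lam
        simp [realSymSpectrum]
      rw [this]
      apply IsOpen.preimage
      · apply Continuous.add
        · exact Continuous.sub continuous_const
            (((continuous_const.mul Complex.continuous_re)).smul continuous_const)
        · exact ((continuous_norm.pow 2)).smul continuous_const
      · exact Units.isOpen
    set K := connectedComponentIn (realSymSpectrum x)ᶜ 0 with hK
    have hKopen : IsOpen K := hUopen.connectedComponentIn
    have h0K : (0:ℂ) ∈ K := mem_connectedComponentIn h0
    have hKconn : IsConnected K := ⟨⟨0, h0K⟩, isPreconnected_connectedComponentIn⟩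
    have hKpath : IsPathConnected K := (hKopen.isConnected_iff_isPathConnected).mp hKconn
    have hpath : ∀ C : ℝ, ∃ lam1 : ℂ, C ≤ ‖lam1‖ ∧
        JoinedIn {lam : ℂ | IsUnit ((yS^2)^2 - (2*lam.re) • (yS^2)
          + (‖lam‖^2) • (1:↥S))} 0 lam1 := by
      intro C
      have : ∃ lam1 ∈ K, C ≤ ‖lam1‖ := by
        by_contra hcon
        push_neg at hcon
        apply hunb
        rw [isBounded_iff_forall_norm_le]
        exact ⟨C, fun lam hlam => le_of_lt (by simpa using hcon lam hlam)⟩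
      obtain ⟨lam1, hlamK, hlamC⟩ := this
      refine ⟨lam1, hlamC, ?_⟩
      exact (hKpath.joinedIn 0 h0K lam1 hlamK).mono
        (fun lam hlam => hunit lam (connectedComponentIn_subset _ _ hlam))
    obtain ⟨a, ha⟩ := key yS hpath
    refine ⟨(a : R), ?_⟩
    letI : NormedAlgebra ℚ ↥S := .restrictScalars ℚ ℝ ↥S
    calc exp (a : R) = ((exp a : ↥S) : R) := (map_exp S.val continuous_subtype_val a).symm
      _ = ((yS ^ 2 : ↥S) : R) := by rw [ha]
      _ = y ^ 2 := by push_cast; rfl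
      _ = x := hy.symm
end

section
/- Let M ∈ M_3(ℝ) be the diagonal matrix with diagonal entries (-1, -2, 1). Then there is no L ∈ M_3(ℝ) with e^L = M, and there is no L ∈ M_3(ℝ) with e^L = -M. -/
open NormedSpace Matrix

lemma no_exp_diag (v : Fin 3 → ℝ) (hv : Function.Injective v) (i : Fin 3) (hi : v i ≤ 0)
    (L : Matrix (Fin 3) (Fin 3) ℝ) (h : NormedSpace.exp L = Matrix.diagonal v) : False := by
  have hcomm : Commute (NormedSpace.exp L) L := (Commute.refl L).exp_left
  rw [h] at hcomm
  -- L is diagonal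
  have hdiag : L = Matrix.diagonal (fun j => L j j) := by
    ext a b
    rcases eq_or_ne a b with rfl | hab
    · simp
    have h1 := congrFun (congrFun hcomm a) b
    simp [Matrix.mul_apply, Matrix.diagonal_apply, Finset.sum_ite_eq, Finset.sum_ite_eq'] at h1
    have : (v a - v b) * L a b = 0 := by ring_nf; linarith
    rcases mul_eq_zero.mp this with h2 | h2
    · exact absurd (hv (by linarith [sub_eq_zero.mp h2])) hab
    · simp [Matrix.diagonal_apply_ne _ hab, h2]
  rw [hdiag, Matrix.exp_diagonal] at h
  have h2 := congrFun (congrFun h i) i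
  simp [Matrix.diagonal_apply, Pi.exp_def] at h2
  have := Real.exp_pos (L i i)
  rw [Real.exp_eq_exp_ℝ] at this
  linarith

/-- The diagonal matrix `M = diag(-1, -2, 1)` in `M₃(ℝ)` is such that neither `M`
nor `-M` is a real matrix exponential. -/
theorem stmt9 :
    (¬ ∃ L : Matrix (Fin 3) (Fin 3) ℝ,
        NormedSpace.exp L = Matrix.diagonal ![-1, -2, 1]) ∧
    (¬ ∃ L : Matrix (Fin 3) (Fin 3) ℝ,
        NormedSpace.exp L = -Matrix.diagonal ![-1, -2, 1]) := by
  constructor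
  · rintro ⟨L, hL⟩
    refine no_exp_diag ![-1, -2, 1] ?_ 0 (by norm_num) L hL
    intro a b hab
    fin_cases a <;> fin_cases b <;> first | rfl | (norm_num at hab)
  · rintro ⟨L, hL⟩
    have hL' : NormedSpace.exp L = Matrix.diagonal ![1, 2, -1] := by
      rw [hL]; ext i j
      fin_cases i <;> fin_cases j <;> simp [Matrix.diagonal]
    refine no_exp_diag ![1, 2, -1] ?_ 2 (by show (-1:ℝ) ≤ 0; norm_num) L hL'
    intro a b hab
    fin_cases a <;> fin_cases b <;> first | rfl | (norm_num at hab)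
end

section
/- Let M ∈ M_n(ℝ) and suppose M admits k real eigenvalues λ_1, …, λ_k (listed with multiplicity, 1 ≤ k ≤ n). Then there exists an orthogonal matrix Q ∈ M_n(ℝ) such that the matrix Qᵀ M Q has (i, i)-entry equal to λ_i for 1 ≤ i ≤ k, and has (i, j)-entry equal to 0 whenever j ≤ k and i > j (i.e. its first k columns vanish below the diagonal). -/
open Matrix Polynomial

lemma evalCharpoly {n : ℕ} (M : Matrix (Fin n) (Fin n) ℝ) (r : ℝ) :
    M.charpoly.eval r = ((r • (1 : Matrix (Fin n) (Fin n) ℝ)) - M).det := by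
  rw [Matrix.charpoly, ← Polynomial.coe_evalRingHom, RingHom.map_det]
  congr 1
  ext i j
  by_cases h : i = j
  · subst h
    simp [charmatrix_apply_eq, Matrix.one_apply, Matrix.sub_apply, Matrix.smul_apply]
  · simp [charmatrix_apply_ne _ _ _ h, Matrix.one_apply, h, Matrix.sub_apply,
      Matrix.smul_apply]

lemma charpolyConj {n : ℕ} (M Q : Matrix (Fin n) (Fin n) ℝ) (hQ : Qᵀ * Q = 1) :
    (Qᵀ * M * Q).charpoly = M.charpoly := by
  set P : Matrix (Fin n) (Fin n) ℝ[X] := Q.map C with hPdef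
  have hPt : Qᵀ.map (C : ℝ → ℝ[X]) = Pᵀ := Matrix.transpose_map
  have hP : Pᵀ * P = 1 := by
    have h2 : (Qᵀ * Q).map (C : ℝ →+* ℝ[X]) = (1 : Matrix (Fin n) (Fin n) ℝ).map (C : ℝ →+* ℝ[X]) := by
      rw [hQ]
    rw [Matrix.map_mul, Matrix.map_one _ (map_zero C) (map_one C), hPt] at h2
    exact h2
  have hchar : charmatrix (Qᵀ * M * Q) = Pᵀ * charmatrix M * P := by
    rw [charmatrix, charmatrix]
    have hmap : ((C : ℝ →+* ℝ[X]).mapMatrix (Qᵀ * M * Q) : Matrix (Fin n) (Fin n) ℝ[X])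
        = Pᵀ * (C : ℝ →+* ℝ[X]).mapMatrix M * P := by
      rw [_root_.map_mul, _root_.map_mul]
      rfl
    have hscal : Pᵀ * Matrix.scalar (Fin n) (X : ℝ[X]) * P
        = Matrix.scalar (Fin n) (X : ℝ[X]) := by
      rw [(Matrix.scalar_commute (X : ℝ[X]) (fun r => Commute.all _ _) Pᵀ).symm.eq]
      rw [mul_assoc, hP, mul_one]
    rw [mul_sub, sub_mul, hmap, hscal]
  rw [Matrix.charpoly, hchar, det_mul, det_mul, Matrix.charpoly]
  rw [det_transpose]
  have h3 : P.det * (charmatrix M).det * P.det = (charmatrix M).det * (P.det * P.det) := by ring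
  rw [h3]
  have h1 : P.det * P.det = 1 := by
    have := congrArg Matrix.det hP
    rwa [det_mul, det_transpose, det_one] at this
  rw [h1, mul_one]

-- Given an eigenvalue with eigenvector, produce orthogonal Q₀ with good first column of Q₀ᵀMQ₀.
lemma firstStep {m : ℕ} (M : Matrix (Fin (m+1)) (Fin (m+1)) ℝ) (lam0 : ℝ)
    (hdet : ((lam0 • (1 : Matrix (Fin (m+1)) (Fin (m+1)) ℝ)) - M).det = 0) :
    ∃ Q : Matrix (Fin (m+1)) (Fin (m+1)) ℝ, Qᵀ * Q = 1 ∧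
      (∀ i, (Qᵀ * M * Q) i 0 = if i = 0 then lam0 else 0) := by
  obtain ⟨v, hv0, hv⟩ := Matrix.exists_mulVec_eq_zero_iff.mpr hdet
  have hMv : M.mulVec v = lam0 • v := by
    have h := hv
    rw [sub_mulVec, smul_mulVec, one_mulVec, sub_eq_zero] at h
    exact h.symm
  -- move to EuclideanSpace
  set E := EuclideanSpace ℝ (Fin (m+1))
  set v' : E := (WithLp.equiv 2 (Fin (m+1) → ℝ)).symm v with hv'def
  have hv'0 : v' ≠ 0 := by
    intro h; apply hv0; have := congrArg WithLp.ofLp h; simpa [hv'def] using this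
  set u : E := ‖v'‖⁻¹ • v' with hudef
  have hu1 : ‖u‖ = 1 := norm_smul_inv_norm hv'0
  have horth : Orthonormal ℝ (({0} : Set (Fin (m+1))).restrict (fun _ => u)) := by
    refine ⟨fun i => hu1, fun i j hij => absurd (Subsingleton.elim i j) hij⟩
  have hcard : Module.finrank ℝ E = Fintype.card (Fin (m+1)) := by
    simp [E]
  obtain ⟨b, hb⟩ := horth.exists_orthonormalBasis_extension_of_card_eq hcard
  have hb0 : b 0 = u := hb 0 rfl
  set Q : Matrix (Fin (m+1)) (Fin (m+1)) ℝ := Matrix.of (fun i j => b j i) with hQdef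
  have hinner : ∀ i j, (∑ x, Q x i * Q x j) = if i = j then 1 else 0 := by
    intro i j
    have := orthonormal_iff_ite.mp b.orthonormal i j
    rw [PiLp.inner_apply] at this
    simpa [hQdef, RCLike.inner_apply, conj_trivial, mul_comm] using this
  have hQorth : Qᵀ * Q = 1 := by
    ext i j
    rw [Matrix.mul_apply, Matrix.one_apply]
    simpa [Matrix.transpose_apply] using hinner i j
  refine ⟨Q, hQorth, fun i => ?_⟩
  -- compute first column
  have hcol : ∀ y, Q y 0 = u y := by intro y; simp [hQdef, hb0]
  have hMu : ∀ x, (∑ y, M x y * Q y 0) = lam0 * Q x 0 := by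
    intro x
    have h1 : M.mulVec (fun y => Q y 0) = fun y => lam0 * Q y 0 := by
      funext y
      have h2 : (fun y => Q y 0) = ‖v'‖⁻¹ • v := by
        funext z
        rw [hcol z, hudef, hv'def]
        rfl
      rw [h2, mulVec_smul, hMv]
      have h3 : Q y 0 = ‖v'‖⁻¹ * v y := congrFun h2 y
      simp only [Pi.smul_apply, smul_eq_mul, h3]
      ring
    have := congrFun h1 x
    simpa [Matrix.mulVec, dotProduct] using this
  calc (Qᵀ * M * Q) i 0 = ∑ y, (∑ x, Q x i * M x y) * Q y 0 := by
        simp [Matrix.mul_apply, Matrix.transpose_apply]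
    _ = ∑ x, Q x i * (∑ y, M x y * Q y 0) := by
        simp_rw [Finset.sum_mul]
        rw [Finset.sum_comm]
        simp_rw [Finset.mul_sum]
        refine Finset.sum_congr rfl fun x _ => Finset.sum_congr rfl fun y _ => by ring
    _ = lam0 * ∑ x, Q x i * Q x 0 := by
        simp only [hMu]
        rw [Finset.mul_sum]
        congr 1; funext x; ring
    _ = if i = 0 then lam0 else 0 := by
        rw [hinner i 0]
        by_cases h : i = 0 <;> simp [h]

private def E2 (m : ℕ) : Fin 1 ⊕ Fin m ≃ Fin (m+1) :=
  finSumFinEquiv.trans (finCongr (Nat.add_comm 1 m))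

private lemma E2l (m : ℕ) (p : Fin 1) : E2 m (Sum.inl p) = 0 := by
  apply Fin.ext
  simp [E2, Fin.ext_iff]

private lemma E2r (m : ℕ) (i : Fin m) : E2 m (Sum.inr i) = i.succ := by
  apply Fin.ext
  simp [E2, Nat.add_comm]

private lemma blockify {m : ℕ} (A : Matrix (Fin (m+1)) (Fin (m+1)) ℝ)
    (h0 : ∀ i, i ≠ 0 → A i 0 = 0) :
    A = Matrix.reindex (E2 m) (E2 m)
      (Matrix.fromBlocks (Matrix.of fun _ _ : Fin 1 => A 0 0)
        (Matrix.of fun (_ : Fin 1) (j : Fin m) => A 0 j.succ) 0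
        (A.submatrix Fin.succ Fin.succ)) := by
  have key : ∀ p q, A (E2 m p) (E2 m q) =
      (Matrix.fromBlocks (Matrix.of fun _ _ : Fin 1 => A 0 0)
        (Matrix.of fun (_ : Fin 1) (j : Fin m) => A 0 j.succ) 0
        (A.submatrix Fin.succ Fin.succ)) p q := by
    rintro (p | p) (q | q)
    · rw [E2l, E2l]; simp
    · rw [E2l, E2r]; simp
    · rw [E2r, E2l]; simp [h0 _ (Fin.succ_ne_zero p)]
    · rw [E2r, E2r]; simp
  ext i j
  rw [reindex_apply, submatrix_apply, ← key, Equiv.apply_symm_apply, Equiv.apply_symm_apply]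

private lemma charpolyStep {m : ℕ} (A : Matrix (Fin (m+1)) (Fin (m+1)) ℝ)
    (h0 : ∀ i, i ≠ 0 → A i 0 = 0) :
    A.charpoly = (X - C (A 0 0)) * (A.submatrix Fin.succ Fin.succ).charpoly := by
  conv_lhs => rw [blockify A h0]
  rw [Matrix.charpoly_reindex, Matrix.charpoly_fromBlocks_zero₂₁]
  congr 1
  rw [Matrix.charpoly, Matrix.det_fin_one, charmatrix_apply_eq]
  simp

private lemma reindex_mul {m : ℕ} (S T : Matrix (Fin 1 ⊕ Fin m) (Fin 1 ⊕ Fin m) ℝ) :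
    Matrix.reindex (E2 m) (E2 m) S * Matrix.reindex (E2 m) (E2 m) T
      = Matrix.reindex (E2 m) (E2 m) (S * T) := by
  simp [reindex_apply, submatrix_mul_equiv]

private lemma aux : ∀ (k n : ℕ) (M : Matrix (Fin n) (Fin n) ℝ), k ≤ n → ∀ lam : Fin k → ℝ,
    (∃ q : Polynomial ℝ, M.charpoly = (∏ i : Fin k, (X - C (lam i))) * q) →
    ∃ Q : Matrix (Fin n) (Fin n) ℝ, Qᵀ * Q = 1 ∧
      (∀ (i : Fin n) (hi : (i : ℕ) < k), (Qᵀ * M * Q) i i = lam ⟨i, hi⟩) ∧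
      (∀ i j : Fin n, (j : ℕ) < k → (j : ℕ) < (i : ℕ) → (Qᵀ * M * Q) i j = 0)
  | 0, n, M, _, lam, _ =>
    ⟨1, by simp, fun i hi => absurd hi (Nat.not_lt_zero _),
      fun i j hj _ => absurd hj (Nat.not_lt_zero _)⟩
  | (k+1), n, M, hkn, lam, heig => by
    obtain ⟨m, rfl⟩ : ∃ m, n = m + 1 := ⟨n - 1, by omega⟩
    obtain ⟨q, hq⟩ := heig
    set lam0 := lam 0 with hlam0
    have hroot : M.charpoly.eval lam0 = 0 := by
      rw [hq, Fin.prod_univ_succ]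
      simp [eval_mul, hlam0]
    have hdet : ((lam0 • (1 : Matrix (Fin (m+1)) (Fin (m+1)) ℝ)) - M).det = 0 := by
      rw [← evalCharpoly]; exact hroot
    obtain ⟨Q₀, hQ₀, hA0⟩ := firstStep M lam0 hdet
    set A := Q₀ᵀ * M * Q₀ with hA
    set B := A.submatrix Fin.succ Fin.succ with hBdef
    have hAz : ∀ i, i ≠ 0 → A i 0 = 0 := fun i hi => by simpa [hi] using hA0 i
    have h00 : A 0 0 = lam0 := by simpa using hA0 0
    have hAchar : A.charpoly = M.charpoly := charpolyConj M Q₀ hQ₀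
    have hBchar : B.charpoly = (∏ i : Fin k, (X - C (lam i.succ))) * q := by
      have h1 : A.charpoly = (X - C lam0) * ((∏ i : Fin k, (X - C (lam i.succ))) * q) := by
        rw [hAchar, hq, Fin.prod_univ_succ, mul_assoc]
      have h2 : A.charpoly = (X - C lam0) * B.charpoly := by
        rw [charpolyStep A hAz, h00, ← hBdef]
      exact mul_left_cancel₀ (Polynomial.X_sub_C_ne_zero lam0) (h2.symm.trans h1)
    obtain ⟨Q₁, hQ₁, hdiag₁, hzero₁⟩ :=
      aux k m B (by omega) (fun i => lam i.succ) ⟨q, hBchar⟩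
    set G := Matrix.fromBlocks (1 : Matrix (Fin 1) (Fin 1) ℝ) 0 0 Q₁ with hG
    set R := Matrix.reindex (E2 m) (E2 m) G with hRdef
    have hGt : Gᵀ = Matrix.fromBlocks 1 0 0 Q₁ᵀ := by
      rw [hG, fromBlocks_transpose]
      simp
    have hGorth : Gᵀ * G = 1 := by
      rw [hGt, hG, fromBlocks_multiply]
      simp [hQ₁, fromBlocks_one]
    have hRt : Rᵀ = Matrix.reindex (E2 m) (E2 m) Gᵀ := by
      rw [hRdef, transpose_reindex]
    have hRorth : Rᵀ * R = 1 := by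
      rw [hRt, hRdef, reindex_mul, hGorth]
      simp
    have hfinal : (Q₀ * R)ᵀ * M * (Q₀ * R) = Rᵀ * A * R := by
      rw [transpose_mul, hA]
      simp only [Matrix.mul_assoc]
    have horthfinal : (Q₀ * R)ᵀ * (Q₀ * R) = 1 := by
      rw [transpose_mul, Matrix.mul_assoc, ← Matrix.mul_assoc Q₀ᵀ Q₀ R, hQ₀, Matrix.one_mul,
        hRorth]
    -- block computation
    set D := Q₁ᵀ * B * Q₁ with hD
    have hRAR : Rᵀ * A * R = Matrix.reindex (E2 m) (E2 m)
        (Matrix.fromBlocks (Matrix.of fun _ _ : Fin 1 => A 0 0)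
          (((Matrix.of fun (_ : Fin 1) (j : Fin m) => A 0 j.succ) : Matrix (Fin 1) (Fin m) ℝ) * Q₁) 0 D) := by
      conv_lhs => rw [blockify A hAz]
      rw [hRt, hRdef, reindex_mul, reindex_mul]
      congr 1
      rw [hGt, hG, fromBlocks_multiply, fromBlocks_multiply]
      simp [hD, hBdef, Matrix.mul_assoc]
    have hC : ∀ p q, ((Q₀ * R)ᵀ * M * (Q₀ * R)) (E2 m p) (E2 m q) =
        (Matrix.fromBlocks (Matrix.of fun _ _ : Fin 1 => A 0 0)
          (((Matrix.of fun (_ : Fin 1) (j : Fin m) => A 0 j.succ) : Matrix (Fin 1) (Fin m) ℝ) * Q₁) 0 D) p q := by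
      intro p q
      rw [hfinal, hRAR, reindex_apply, submatrix_apply, Equiv.symm_apply_apply,
        Equiv.symm_apply_apply]
    refine ⟨Q₀ * R, horthfinal, ?_, ?_⟩
    · intro i hi
      by_cases hi0 : i = 0
      · subst hi0
        have := hC (Sum.inl 0) (Sum.inl 0)
        rw [E2l] at this
        rw [this]
        simp only [fromBlocks_apply₁₁, Matrix.of_apply, h00, hlam0]
        congr 1
      · obtain ⟨i', rfl⟩ := Fin.eq_succ_of_ne_zero hi0
        have hik : (i' : ℕ) < k := by
          have h := hi
          rw [Fin.val_succ] at h
          omega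
        have := hC (Sum.inr i') (Sum.inr i')
        rw [E2r] at this
        rw [this]
        simp only [fromBlocks_apply₂₂]
        rw [hdiag₁ i' hik]
        congr 1
    · intro i j hj hji
      have hi0 : i ≠ 0 := by
        intro h
        rw [h] at hji
        simp at hji
      obtain ⟨i', rfl⟩ := Fin.eq_succ_of_ne_zero hi0
      by_cases hj0 : j = 0
      · subst hj0
        have := hC (Sum.inr i') (Sum.inl 0)
        rw [E2r, E2l] at this
        rw [this]
        simp
      · obtain ⟨j', rfl⟩ := Fin.eq_succ_of_ne_zero hj0
        have hjk : (j' : ℕ) < k := by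
          have h := hj
          rw [Fin.val_succ] at h
          omega
        have hji' : (j' : ℕ) < (i' : ℕ) := by
          have h := hji
          rw [Fin.val_succ, Fin.val_succ] at h
          omega
        have := hC (Sum.inr i') (Sum.inr j')
        rw [E2r, E2r] at this
        rw [this]
        simp only [fromBlocks_apply₂₂]
        exact hzero₁ i' j' hjk hji'

/-- Weak Schur reduction: if `M ∈ Mₙ(ℝ)` admits `k` real eigenvalues `λ₁, …, λ_k`
(counted with multiplicity, i.e. `∏ (X - λᵢ)` divides the characteristic polynomial,
`1 ≤ k ≤ n`), then there is an orthogonal `Q` such that `Qᵀ M Q` has `(i,i)`-entry `λᵢ`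
for `i ≤ k` and its first `k` columns vanish below the diagonal. -/
theorem stmt13 {n : ℕ} (M : Matrix (Fin n) (Fin n) ℝ) (k : ℕ) (hk1 : 1 ≤ k) (hkn : k ≤ n)
    (lam : Fin k → ℝ)
    (heig : ∃ q : Polynomial ℝ,
      M.charpoly = (∏ i : Fin k, (Polynomial.X - Polynomial.C (lam i))) * q) :
    ∃ Q : Matrix (Fin n) (Fin n) ℝ, Qᵀ * Q = 1 ∧
      (∀ (i : Fin n) (hi : (i : ℕ) < k), (Qᵀ * M * Q) i i = lam ⟨i, hi⟩) ∧
      (∀ i j : Fin n, (j : ℕ) < k → (j : ℕ) < (i : ℕ) → (Qᵀ * M * Q) i j = 0) := by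
  exact aux k n M hkn lam heig
end

section
/- If M ∈ M_n(ℝ) has det M < 0, then there exist B_1, B_2 ∈ M_n(ℝ) such that M = Ĩ_n · e^{B_1} e^{B_2}, where Ĩ_n is the diagonal matrix with diagonal entries (-1, 1, …, 1). -/
open Matrix NormedSpace
open scoped Kronecker

namespace Stmt15Aux

variable {ι : Type*} [Fintype ι] [DecidableEq ι]

theorem expKey (A : Matrix ι ι ℝ) (θ : ι → ℝ)
    (H1 : A * A = Matrix.diagonal (fun i => -θ i ^ 2))
    (H2 : ∀ i j, A i j ≠ 0 → θ i = θ j) :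
    exp A = Matrix.diagonal (fun i => Real.cos (θ i)) +
      Matrix.diagonal (fun i => if θ i = 0 then 1 else Real.sin (θ i) / θ i) * A := by
  have heven : ∀ k : ℕ, A ^ (2 * k) = Matrix.diagonal (fun i => (-θ i ^ 2) ^ k) := by
    intro k
    induction k with
    | zero => simp
    | succ k ih =>
      have h2 : 2 * (k + 1) = 2 * k + 2 := by ring
      rw [h2, pow_add, ih, pow_two, H1, diagonal_mul_diagonal]
      simp only [← pow_succ]
  have key : HasSum (fun k : ℕ => ((k.factorial : ℝ)⁻¹) • A ^ k)
      (Matrix.diagonal (fun i => Real.cos (θ i)) +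
        Matrix.diagonal (fun i => if θ i = 0 then 1 else Real.sin (θ i) / θ i) * A) := by
    refine Pi.hasSum.mpr fun i => Pi.hasSum.mpr fun j => ?_
    have hentry : ∀ k : ℕ, (((k.factorial : ℝ)⁻¹) • A ^ k) i j
        = ((k.factorial : ℝ)⁻¹) * (A ^ k) i j := fun k => rfl
    have hRHS : (Matrix.diagonal (fun i => Real.cos (θ i)) +
        Matrix.diagonal (fun i => if θ i = 0 then 1 else Real.sin (θ i) / θ i) * A) i j
        = (if i = j then Real.cos (θ i) else 0) +
          (if θ i = 0 then 1 else Real.sin (θ i) / θ i) * A i j := by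
      simp [Matrix.add_apply, Matrix.diagonal_apply, Matrix.diagonal_mul]
    rw [show (fun k : ℕ => (((k.factorial : ℝ)⁻¹) • A ^ k) i j)
        = fun k : ℕ => ((k.factorial : ℝ)⁻¹) * (A ^ k) i j from funext hentry, hRHS]
    refine HasSum.even_add_odd ?_ ?_
    · -- even part
      have hfun : (fun k : ℕ => (((2 * k).factorial : ℝ)⁻¹) * (A ^ (2 * k)) i j)
          = fun k : ℕ => if i = j then (-1) ^ k * θ i ^ (2 * k) / ((2 * k).factorial : ℝ) else 0 := by
        funext k
        rw [heven k, Matrix.diagonal_apply]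
        by_cases h : i = j
        · rw [if_pos h, if_pos h, neg_pow, ← pow_mul]
          ring
        · rw [if_neg h, if_neg h, mul_zero]
      rw [hfun]
      by_cases h : i = j
      · simp only [if_pos h]
        exact Real.hasSum_cos (θ i)
      · simp only [if_neg h]
        exact hasSum_zero
    · -- odd part
      have hfun : (fun k : ℕ => (((2 * k + 1).factorial : ℝ)⁻¹) * (A ^ (2 * k + 1)) i j)
          = fun k : ℕ => ((((2 * k + 1).factorial : ℝ)⁻¹) * (-θ i ^ 2) ^ k) * A i j := by
        funext k
        rw [pow_succ, heven k]
        rw [Matrix.diagonal_mul]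
        ring
      rw [hfun]
      refine HasSum.mul_right (A i j) ?_
      by_cases hθ : θ i = 0
      · rw [if_pos hθ]
        have h0 : ((((2 * 0 + 1).factorial : ℝ)⁻¹) * (-θ i ^ 2) ^ 0) = 1 := by
          simp
        rw [← h0]
        apply hasSum_single 0
        intro k hk
        rw [hθ]
        simp [zero_pow hk]
      · rw [if_neg hθ]
        have := (Real.hasSum_sin (θ i)).div_const (θ i)
        have hfun2 : (fun k : ℕ => (-1) ^ k * θ i ^ (2 * k + 1) / ((2 * k + 1).factorial : ℝ) / θ i)
            = fun k : ℕ => (((2 * k + 1).factorial : ℝ)⁻¹) * (-θ i ^ 2) ^ k := by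
          funext k
          rw [show (-θ i ^ 2) ^ k = (-1) ^ k * θ i ^ (2 * k) from by
            rw [neg_pow, pow_mul]]
          field_simp
          ring
        rwa [hfun2] at this
  rw [exp_eq_tsum (𝕂 := ℝ)]
  exact key.tsum_eq

theorem det_exp_pos (X : Matrix ι ι ℝ) : 0 < (exp X).det := by
  have h2 : exp X = exp ((2⁻¹ : ℝ) • X) * exp ((2⁻¹ : ℝ) • X) := by
    rw [← Matrix.exp_add_of_commute _ _ (Commute.refl _)]
    congr 1
    rw [← add_smul]
    norm_num
  have hu : IsUnit (exp ((2⁻¹ : ℝ) • X)).det :=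
    (Matrix.isUnit_iff_isUnit_det _).mp (Matrix.isUnit_exp _)
  rw [h2, Matrix.det_mul]
  exact mul_self_pos.mpr hu.ne_zero

theorem exp_conj_star {U : Matrix ι ι ℝ} (h1 : U * star U = 1) (X : Matrix ι ι ℝ) :
    exp (U * X * star U) = U * exp X * star U := by
  have hdet : IsUnit U.det := by
    apply IsUnit.of_mul_eq_one (star U).det
    rw [← Matrix.det_mul, h1, Matrix.det_one]
  have hU : IsUnit U := (Matrix.isUnit_iff_isUnit_det U).mpr hdet
  have h2 : U⁻¹ = star U := Matrix.inv_eq_right_inv h1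
  rw [← h2, Matrix.exp_conj U X hU]

theorem exp_diag (v : ι → ℝ) :
    exp (Matrix.diagonal v) = Matrix.diagonal (fun i => Real.exp (v i)) := by
  rw [Matrix.exp_diagonal v, Pi.exp_def]
  simp [Real.exp_eq_exp_ℝ]

set_option maxHeartbeats 1000000 in
theorem so_log (Q : Matrix ι ι ℝ) (h1 : Q * star Q = 1) (h2 : star Q * Q = 1)
    (h3 : Q.det = 1) : ∃ B : Matrix ι ι ℝ, exp B = Q := by
  classical
  set C : Matrix ι ι ℝ := (2⁻¹ : ℝ) • (Q + star Q) with hCdef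
  set W : Matrix ι ι ℝ := (2⁻¹ : ℝ) • (Q - star Q) with hWdef
  have hQCW : Q = C + W := by rw [hCdef, hWdef]; module
  have hC : star C = C := by
    rw [hCdef]; simp [star_smul, star_add, star_star]; rw [add_comm]
  have hW : star W = -W := by
    rw [hWdef]; simp [star_smul, star_sub, star_star]; module
  have hQQ' : star Q * Q = Q * star Q := h2.trans h1.symm
  have base1 : (Q + star Q) * (Q - star Q) = (Q - star Q) * (Q + star Q) := by
    simp only [mul_add, add_mul, mul_sub, sub_mul, hQQ']
    abel
  have hCW : C * W = W * C := by
    calc C * W = (2⁻¹ : ℝ) • ((2⁻¹ : ℝ) • ((Q + star Q) * (Q - star Q))) := by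
          rw [hCdef, hWdef, smul_mul_assoc, mul_smul_comm]
      _ = (2⁻¹ : ℝ) • ((2⁻¹ : ℝ) • ((Q - star Q) * (Q + star Q))) := by rw [base1]
      _ = W * C := by rw [hCdef, hWdef, smul_mul_assoc, mul_smul_comm]
  have base2 : (Q - star Q) * (Q - star Q)
      = (Q + star Q) * (Q + star Q) - (4 : ℝ) • (1 : Matrix ι ι ℝ) := by
    simp only [mul_add, add_mul, mul_sub, sub_mul, h1, h2, hQQ']
    module
  have hCC : C * C = (2⁻¹ * 2⁻¹ : ℝ) • ((Q + star Q) * (Q + star Q)) := by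
    rw [hCdef, smul_mul_assoc, mul_smul_comm, smul_smul]
  have hW2 : W * W = C * C - 1 := by
    have hWW : W * W = (2⁻¹ * 2⁻¹ : ℝ) • ((Q - star Q) * (Q - star Q)) := by
      rw [hWdef, smul_mul_assoc, mul_smul_comm, smul_smul]
    rw [hWW, base2, smul_sub, ← hCC, smul_smul]
    norm_num
  have hCherm : C.IsHermitian := by
    rw [Matrix.IsHermitian, ← Matrix.star_eq_conjTranspose]; exact hC
  set μ : ι → ℝ := hCherm.eigenvalues with hμdef
  set U : Matrix ι ι ℝ := (Matrix.IsHermitian.eigenvectorUnitary hCherm : Matrix ι ι ℝ) with hUdef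
  have hU1 : U * star U = 1 :=
    Matrix.mem_unitaryGroup_iff.mp (Matrix.IsHermitian.eigenvectorUnitary hCherm).2
  have hU2 : star U * U = 1 :=
    Matrix.mem_unitaryGroup_iff'.mp (Matrix.IsHermitian.eigenvectorUnitary hCherm).2
  have hspec : C = U * Matrix.diagonal μ * star U := by
    have h := hCherm.spectral_theorem
    simpa [hUdef, hμdef] using h
  have hins : ∀ Z : Matrix ι ι ℝ, U * (star U * Z) = Z := fun Z => by
    rw [← Matrix.mul_assoc, hU1, Matrix.one_mul]
  have hins2 : ∀ Z : Matrix ι ι ℝ, star U * (U * Z) = Z := fun Z => by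
    rw [← Matrix.mul_assoc, hU2, Matrix.one_mul]
  have hconj_mul : ∀ X Y : Matrix ι ι ℝ,
      (star U * X * U) * (star U * Y * U) = star U * (X * Y) * U := by
    intro X Y
    simp only [Matrix.mul_assoc, hins]
  set Wt : Matrix ι ι ℝ := star U * W * U with hWtdef
  have hCt : star U * C * U = Matrix.diagonal μ := by
    rw [hspec]
    simp only [Matrix.mul_assoc, hU2, Matrix.mul_one, hins2]
  have hWtC : Wt * Matrix.diagonal μ = Matrix.diagonal μ * Wt := by
    rw [← hCt, hWtdef, hconj_mul, hconj_mul, hCW]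
  have hWtstar : star Wt = -Wt := by
    rw [hWtdef]
    simp [StarMul.star_mul, star_star, hW, Matrix.mul_assoc]
  have hskew : ∀ i j, Wt j i = -Wt i j := by
    intro i j
    have h := congrFun (congrFun hWtstar i) j
    simpa [Matrix.star_eq_conjTranspose, Matrix.conjTranspose_apply] using h
  have hdiag0 : ∀ i, Wt i i = 0 := fun i => by have := hskew i i; linarith
  have hWt2 : Wt * Wt = Matrix.diagonal (fun i => μ i ^ 2 - 1) := by
    rw [hWtdef, hconj_mul, hW2]
    have hcc : star U * (C * C) * U = Matrix.diagonal μ * Matrix.diagonal μ := by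
      rw [← hconj_mul, hCt]
    rw [Matrix.mul_sub, Matrix.sub_mul, Matrix.mul_one, hU2, hcc, diagonal_mul_diagonal,
      ← Matrix.diagonal_one, ← Matrix.diagonal_sub]
    congr 1
    funext i
    ring
  have hsupp : ∀ i j, Wt i j ≠ 0 → μ i = μ j := by
    intro i j hne
    have h := congrFun (congrFun hWtC i) j
    rw [Matrix.mul_diagonal, Matrix.diagonal_mul, mul_comm (μ i)] at h
    exact (mul_left_cancel₀ hne h).symm
  have hrowsum : ∀ i, μ i ^ 2 - 1 = -∑ j, (Wt i j) ^ 2 := by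
    intro i
    have h := congrFun (congrFun hWt2 i) i
    rw [Matrix.mul_apply] at h
    have h2 : (Matrix.diagonal (fun i => μ i ^ 2 - 1) : Matrix ι ι ℝ) i i = μ i ^ 2 - 1 :=
      Matrix.diagonal_apply_eq _ i
    rw [h2] at h
    rw [← h, ← Finset.sum_neg_distrib]
    apply Finset.sum_congr rfl
    intro j _
    rw [hskew i j]
    ring
  have hrow0 : ∀ i, μ i ^ 2 = 1 → ∀ j, Wt i j = 0 := by
    intro i hμ j
    have hsum : ∑ j, (Wt i j) ^ 2 = 0 := by
      have := hrowsum i; rw [hμ] at this; linarith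
    have h := (Finset.sum_eq_zero_iff_of_nonneg
      (fun j _ => sq_nonneg (Wt i j))).mp hsum j (Finset.mem_univ j)
    exact pow_eq_zero_iff (two_ne_zero) |>.mp h
  have hcol0 : ∀ j, μ j ^ 2 = 1 → ∀ i, Wt i j = 0 := by
    intro j hμ i
    rw [show Wt i j = -Wt j i from by rw [hskew j i], hrow0 j hμ i, neg_zero]
  have hbound : ∀ i, μ i ^ 2 ≤ 1 := by
    intro i
    have h := hrowsum i
    have h2 : (0 : ℝ) ≤ ∑ j, (Wt i j) ^ 2 := Finset.sum_nonneg fun j _ => sq_nonneg _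
    linarith
  set θ : ι → ℝ := fun i => if μ i = -1 then 0 else Real.arccos (μ i) with hθdef
  set g : ι → ℝ := fun i => Real.arccos (μ i) / Real.sqrt (1 - μ i ^ 2) with hgdef
  set A0 : Matrix ι ι ℝ := Matrix.diagonal g * Wt with hA0def
  have hA0entry : ∀ i j, A0 i j = g i * Wt i j := fun i j => by
    rw [hA0def, Matrix.diagonal_mul]
  have hWtg : Wt * Matrix.diagonal g = Matrix.diagonal g * Wt := by
    ext i j
    rw [Matrix.mul_diagonal, Matrix.diagonal_mul]
    by_cases h : Wt i j = 0
    · simp [h]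
    · have hμij := hsupp i j h
      simp only [hgdef]
      rw [hμij, mul_comm]
  have hA02 : A0 * A0 = Matrix.diagonal (fun i => -θ i ^ 2) := by
    rw [hA0def]
    calc Matrix.diagonal g * Wt * (Matrix.diagonal g * Wt)
        = Matrix.diagonal g * (Wt * Matrix.diagonal g) * Wt := by simp only [Matrix.mul_assoc]
      _ = Matrix.diagonal g * (Matrix.diagonal g * Wt) * Wt := by rw [hWtg]
      _ = Matrix.diagonal g * Matrix.diagonal g * (Wt * Wt) := by simp only [Matrix.mul_assoc]
      _ = Matrix.diagonal (fun i => g i * g i) * Matrix.diagonal (fun i => μ i ^ 2 - 1) := by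
          rw [diagonal_mul_diagonal, hWt2]
      _ = Matrix.diagonal (fun i => -θ i ^ 2) := by
          rw [diagonal_mul_diagonal]
          refine congrArg Matrix.diagonal (funext fun i => ?_)
          by_cases hm : μ i = -1
          · have : (1 : ℝ) - μ i ^ 2 = 0 := by rw [hm]; norm_num
            simp [hθdef, hgdef, hm, this]
          · rcases eq_or_lt_of_le (hbound i) with he | hl
            · have h1' : μ i = 1 := by
                have hz : (μ i - 1) * (μ i + 1) = 0 := by nlinarith [he]
                rcases mul_eq_zero.mp hz with h | h
                · linarith
                · exact absurd (by linarith : μ i = -1) hm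
              simp [hθdef, hgdef, h1', Real.arccos_one]
            · have hne : (0 : ℝ) < 1 - μ i ^ 2 := by linarith
              have hsq : Real.sqrt (1 - μ i ^ 2) ^ 2 = 1 - μ i ^ 2 :=
                Real.sq_sqrt (le_of_lt hne)
              have hsne : Real.sqrt (1 - μ i ^ 2) ≠ 0 :=
                ne_of_gt (Real.sqrt_pos.mpr hne)
              simp only [hθdef, hgdef, if_neg hm]
              rw [div_mul_div_comm, ← sq, ← sq, hsq]
              field_simp
              ring
  have hA0supp : ∀ i j, A0 i j ≠ 0 → θ i = θ j := by
    intro i j h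
    rw [hA0entry] at h
    have hw : Wt i j ≠ 0 := fun hz => h (by rw [hz, mul_zero])
    simp only [hθdef]
    rw [hsupp i j hw]
  have hexpA0 := expKey A0 θ hA02 hA0supp
  set ε : ι → ℝ := fun i => if μ i = -1 then -1 else 1 with hεdef
  set ν : ι → ℝ := fun i => if μ i = -1 then 1 else μ i with hνdef
  have hWtε : ∀ i j, Wt i j * ε j = Wt i j := by
    intro i j
    by_cases hm : μ j = -1
    · rw [hcol0 j (by rw [hm]; norm_num) i]; ring
    · simp [hεdef, hm]
  have hmulε : ∀ f : ι → ℝ, (Matrix.diagonal f + Wt) * Matrix.diagonal ε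
      = Matrix.diagonal (fun i => f i * ε i) + Wt := by
    intro f
    ext i j
    rw [Matrix.mul_diagonal, Matrix.add_apply, Matrix.add_apply]
    by_cases h : i = j
    · subst h
      rw [Matrix.diagonal_apply_eq, Matrix.diagonal_apply_eq, hdiag0, add_zero, add_zero]
    · simp only [Matrix.diagonal_apply_ne _ h, zero_add]
      exact hWtε i j
  have hY : exp A0 = Matrix.diagonal ν + Wt := by
    rw [hexpA0]
    ext i j
    by_cases h : i = j
    · subst h
      rw [Matrix.add_apply, Matrix.add_apply, Matrix.diagonal_apply_eq, Matrix.diagonal_apply_eq,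
        Matrix.diagonal_mul, hA0entry, hdiag0]
      by_cases hm : μ i = -1
      · simp [hθdef, hνdef, hm]
      · simp only [hθdef, hνdef, if_neg hm]
        rw [Real.cos_arccos (by nlinarith [hbound i]) (by nlinarith [hbound i])]
        ring
    · rw [Matrix.add_apply, Matrix.add_apply, Matrix.diagonal_apply_ne _ h,
        Matrix.diagonal_apply_ne _ h, Matrix.diagonal_mul, hA0entry, zero_add, zero_add]
      by_cases hw : Wt i j = 0
      · simp [hw]
      · have hm2 : μ i ^ 2 ≠ 1 := fun hsq => hw (hrow0 i hsq j)
        have hm : μ i ≠ -1 := fun hh => hm2 (by rw [hh]; norm_num)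
        have hlt : μ i ^ 2 < 1 := lt_of_le_of_ne (hbound i) hm2
        have hmlt : μ i < 1 := by nlinarith
        have hθpos : 0 < Real.arccos (μ i) := Real.arccos_pos.mpr hmlt
        have hane : Real.arccos (μ i) ≠ 0 := ne_of_gt hθpos
        have hone : (0 : ℝ) < 1 - μ i ^ 2 := by linarith
        have hsne : Real.sqrt (1 - μ i ^ 2) ≠ 0 := ne_of_gt (Real.sqrt_pos.mpr hone)
        have hθi : θ i = Real.arccos (μ i) := by simp [hθdef, hm]
        have hgi : g i = Real.arccos (μ i) / Real.sqrt (1 - μ i ^ 2) := by simp [hgdef]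
        rw [if_neg (show θ i ≠ 0 from by rw [hθi]; exact hane), hθi, hgi, Real.sin_arccos]
        field_simp
  set s : Finset ι := Finset.univ.filter (fun i => μ i = -1) with hsdef
  have hdetε : (Matrix.diagonal ε).det = (-1 : ℝ) ^ s.card := by
    rw [Matrix.det_diagonal,
      ← Finset.prod_filter_mul_prod_filter_not Finset.univ (fun i => μ i = -1)]
    have hA : ∏ i ∈ Finset.univ.filter (fun i => μ i = -1), ε i = (-1 : ℝ) ^ s.card := by
      rw [Finset.prod_congr rfl (fun i hi => show ε i = -1 by
        simp [hεdef, (Finset.mem_filter.mp hi).2]), Finset.prod_const, hsdef]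
    have hB : ∏ i ∈ Finset.univ.filter (fun i => ¬μ i = -1), ε i = 1 :=
      Finset.prod_eq_one fun i hi => by simp [hεdef, (Finset.mem_filter.mp hi).2]
    rw [hA, hB, mul_one]
  have hQt : Matrix.diagonal μ + Wt = star U * Q * U := by
    rw [hQCW, Matrix.mul_add, Matrix.add_mul, hCt]
  have hdetQt : (Matrix.diagonal μ + Wt).det = 1 := by
    rw [hQt, Matrix.det_mul, Matrix.det_mul]
    have hdU : (star U).det * U.det = 1 := by
      rw [← Matrix.det_mul, hU2, Matrix.det_one]
    calc (star U).det * Q.det * U.det = Q.det * ((star U).det * U.det) := by ring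
      _ = 1 := by rw [hdU, h3, one_mul]
  have hνεμ : (fun i => ν i * ε i) = μ := by
    funext i
    by_cases hm : μ i = -1 <;> simp [hνdef, hεdef, hm]
  have hμεν : (fun i => μ i * ε i) = ν := by
    funext i
    by_cases hm : μ i = -1 <;> simp [hνdef, hεdef, hm]
  have hevencard : Even s.card := by
    have hpos := det_exp_pos A0
    rw [hY] at hpos
    have hfact : Matrix.diagonal ν + Wt = (Matrix.diagonal μ + Wt) * Matrix.diagonal ε := by
      rw [hmulε μ, hμεν]
    rw [hfact, Matrix.det_mul, hdetQt, one_mul, hdetε] at hpos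
    by_contra hodd
    rw [Nat.not_even_iff_odd] at hodd
    rw [hodd.neg_one_pow] at hpos
    linarith
  obtain ⟨m, hm⟩ := hevencard
  have hcard : Fintype.card (Fin m × Fin 2) = Fintype.card {x // x ∈ s} := by
    simp only [Fintype.card_prod, Fintype.card_fin, Fintype.card_coe]
    omega
  set e : (Fin m × Fin 2) ≃ {x // x ∈ s} := Fintype.equivOfCardEq hcard with hedef
  set σ : Fin m × Fin 2 → ι := fun k => (e k : ι) with hσdef
  have hσinj : Function.Injective σ := fun a b hab => e.injective (Subtype.ext hab)
  have hσmem : ∀ k, μ (σ k) = -1 := fun k => (Finset.mem_filter.mp (e k).2).2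
  have hσsurj : ∀ i, μ i = -1 → ∃ k, σ k = i := fun i hi =>
    ⟨e.symm ⟨i, Finset.mem_filter.mpr ⟨Finset.mem_univ _, hi⟩⟩, by simp [hσdef]⟩
  set E : Matrix ι (Fin m × Fin 2) ℝ := Matrix.of (fun i k => if i = σ k then 1 else 0)
    with hEdef
  set P : Matrix ι ι ℝ := Matrix.diagonal (fun i => if μ i = -1 then (1 : ℝ) else 0) with hPdef
  have hE1 : Eᴴ * E = 1 := by
    ext k l
    rw [Matrix.mul_apply]
    simp only [hEdef, Matrix.conjTranspose_apply, Matrix.of_apply, star_trivial]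
    rw [Finset.sum_eq_single (σ k)]
    · rw [if_pos rfl, one_mul, Matrix.one_apply]
      simp [hσinj.eq_iff, eq_comm]
    · intro b _ hb
      rw [if_neg hb, zero_mul]
    · intro hb
      exact absurd (Finset.mem_univ _) hb
  have hE2 : E * Eᴴ = P := by
    ext i j
    rw [Matrix.mul_apply, hPdef]
    simp only [hEdef, Matrix.conjTranspose_apply, Matrix.of_apply, star_trivial]
    by_cases hi : μ i = -1
    · obtain ⟨k0, hk0⟩ := hσsurj i hi
      rw [Finset.sum_eq_single k0]
      · rw [if_pos hk0.symm, one_mul]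
        by_cases hij : i = j
        · subst hij
          rw [if_pos hk0.symm, Matrix.diagonal_apply_eq]
          simp [hi]

        · rw [if_neg (by rw [hk0]; exact fun hh => hij hh.symm), Matrix.diagonal_apply_ne _ hij]
      · intro b _ hb
        rw [if_neg (fun hh => hb (hσinj (by rw [← hh, hk0]))), zero_mul]
      · intro hb
        exact absurd (Finset.mem_univ _) hb
    · rw [Finset.sum_eq_zero, Matrix.diagonal_apply]
      · by_cases hij : i = j
        · subst hij; simp [hi]
        · simp [hij]
      · intro b _
        rw [if_neg (fun hh => hi (by rw [hh]; exact hσmem b)), zero_mul]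
  set J2 : Matrix (Fin 2) (Fin 2) ℝ := !![0, -1; 1, 0] with hJ2def
  have hJ2 : J2 * J2 = -1 := by
    ext i j
    fin_cases i <;> fin_cases j <;>
      simp [hJ2def, Matrix.mul_apply, Fin.sum_univ_two, Matrix.one_apply]
  set J0 : Matrix (Fin m × Fin 2) (Fin m × Fin 2) ℝ := (1 : Matrix (Fin m) (Fin m) ℝ) ⊗ₖ J2
    with hJ0def
  have hJ0 : J0 * J0 = -1 := by
    rw [hJ0def, ← Matrix.mul_kronecker_mul, one_mul, hJ2]
    ext ⟨a, x⟩ ⟨b, y⟩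
    simp [Matrix.kroneckerMap_apply, Matrix.one_apply, Prod.ext_iff]
    by_cases hab : a = b <;> simp [hab]
  set J : Matrix ι ι ℝ := E * J0 * Eᴴ with hJdef
  have hJJ : J * J = -P := by
    rw [hJdef]
    calc E * J0 * Eᴴ * (E * J0 * Eᴴ) = E * (J0 * (Eᴴ * E * (J0 * Eᴴ))) := by
          simp only [Matrix.mul_assoc]
      _ = E * (J0 * (J0 * Eᴴ)) := by rw [hE1, Matrix.one_mul]
      _ = E * (J0 * J0) * Eᴴ := by simp only [Matrix.mul_assoc]
      _ = -(E * Eᴴ) := by rw [hJ0]; simp [Matrix.mul_neg, Matrix.neg_mul]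
      _ = -P := by rw [hE2]
  have hPJ : P * J = J := by
    rw [hJdef, ← hE2]
    calc E * Eᴴ * (E * J0 * Eᴴ) = E * (Eᴴ * E * (J0 * Eᴴ)) := by simp only [Matrix.mul_assoc]
      _ = E * (J0 * Eᴴ) := by rw [hE1, Matrix.one_mul]
      _ = E * J0 * Eᴴ := by simp only [Matrix.mul_assoc]
  have hJP : J * P = J := by
    rw [hJdef, ← hE2]
    calc E * J0 * Eᴴ * (E * Eᴴ) = E * (J0 * (Eᴴ * E * Eᴴ)) := by simp only [Matrix.mul_assoc]
      _ = E * (J0 * Eᴴ) := by rw [hE1, Matrix.one_mul]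
      _ = E * J0 * Eᴴ := by simp only [Matrix.mul_assoc]
  have hJs : ∀ i j, J i j ≠ 0 → μ i = -1 ∧ μ j = -1 := by
    intro i j h
    constructor
    · by_contra hmi
      have hh := congrFun (congrFun hPJ i) j
      rw [hPdef, Matrix.diagonal_mul, if_neg hmi, zero_mul] at hh
      exact h hh.symm
    · by_contra hmj
      have hh := congrFun (congrFun hJP i) j
      rw [hPdef, Matrix.mul_diagonal, if_neg hmj, mul_zero] at hh
      exact h hh.symm
  have hA0P : A0 * P = 0 := by
    ext i j
    rw [hPdef, Matrix.mul_diagonal, Matrix.zero_apply, hA0entry]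
    by_cases hmj : μ j = -1
    · rw [hcol0 j (by rw [hmj]; norm_num) i]; ring
    · rw [if_neg hmj]; ring
  have hPA0 : P * A0 = 0 := by
    ext i j
    rw [hPdef, Matrix.diagonal_mul, Matrix.zero_apply, hA0entry]
    by_cases hmi : μ i = -1
    · rw [hrow0 i (by rw [hmi]; norm_num) j]; ring
    · rw [if_neg hmi]; ring
  have hA0J : A0 * J = 0 := by
    rw [← hPJ, ← Matrix.mul_assoc, hA0P, Matrix.zero_mul]
  have hJA0 : J * A0 = 0 := by
    rw [← hJP, Matrix.mul_assoc, hPA0, Matrix.mul_zero]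
  set θ' : ι → ℝ := fun i => if μ i = -1 then Real.pi else 0 with hθ'def
  have hπJ2 : (Real.pi • J) * (Real.pi • J) = Matrix.diagonal (fun i => -θ' i ^ 2) := by
    rw [smul_mul_assoc, mul_smul_comm, hJJ, smul_smul]
    ext i j
    rw [Matrix.smul_apply, Matrix.neg_apply, Matrix.diagonal_apply, hPdef, Matrix.diagonal_apply]
    by_cases h : i = j
    · by_cases hmi : μ i = -1 <;> simp [h, hmi, hθ'def] <;> ring
    · simp [h]
  have hπJsupp : ∀ i j, (Real.pi • J) i j ≠ 0 → θ' i = θ' j := by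
    intro i j h
    have hj : J i j ≠ 0 := fun hz => h (by rw [Matrix.smul_apply, hz, smul_zero])
    obtain ⟨hi', hj'⟩ := hJs i j hj
    simp [hθ'def, hi', hj']
  have hexpJ : exp (Real.pi • J) = Matrix.diagonal ε := by
    rw [expKey _ θ' hπJ2 hπJsupp]
    ext i j
    by_cases h : i = j
    · subst h
      rw [Matrix.add_apply, Matrix.diagonal_apply_eq, Matrix.diagonal_mul, Matrix.smul_apply,
        Matrix.diagonal_apply_eq]
      by_cases hmi : μ i = -1
      · simp [hθ'def, hεdef, hmi, Real.cos_pi, Real.sin_pi, Real.pi_ne_zero]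
      · have hJ0' : J i i = 0 := by
          by_contra hz; exact hmi (hJs i i hz).1
        simp [hθ'def, hεdef, hmi, hJ0']
    · rw [Matrix.add_apply, Matrix.diagonal_apply_ne _ h, Matrix.diagonal_mul, Matrix.smul_apply,
        Matrix.diagonal_apply_ne _ h, zero_add]
      by_cases hz : J i j = 0
      · simp [hz]
      · have hi' := (hJs i j hz).1
        simp [hθ'def, hi', Real.sin_pi, Real.pi_ne_zero]
  have hcomm : Commute A0 (Real.pi • J) := by
    show A0 * (Real.pi • J) = (Real.pi • J) * A0
    rw [mul_smul_comm, smul_mul_assoc, hA0J, hJA0]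
  refine ⟨U * (A0 + Real.pi • J) * star U, ?_⟩
  rw [exp_conj_star hU1, Matrix.exp_add_of_commute A0 (Real.pi • J) hcomm, hY, hexpJ,
    hmulε ν, hνεμ, hQt]
  calc U * (star U * Q * U) * star U = U * (star U * (Q * (U * star U))) := by
        simp only [Matrix.mul_assoc]
    _ = Q := by rw [hU1, Matrix.mul_one, ← Matrix.mul_assoc, hU1, Matrix.one_mul]

end Stmt15Aux

open Stmt15Aux

set_option maxHeartbeats 1000000

/-- If `M ∈ Mₙ(ℝ)` has negative determinant, then `M = Ĩₙ · e^{B₁} e^{B₂}` for some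
`B₁, B₂ ∈ Mₙ(ℝ)`, where `Ĩₙ = diag(-1, 1, …, 1)`. -/
theorem stmt15 {n : ℕ} (M : Matrix (Fin n) (Fin n) ℝ) (hM : M.det < 0) :
    ∃ B₁ B₂ : Matrix (Fin n) (Fin n) ℝ,
      M = (Matrix.diagonal fun i : Fin n => if (i : ℕ) = 0 then (-1 : ℝ) else 1) *
          (NormedSpace.exp B₁ * NormedSpace.exp B₂) := by
  classical
  have hn : n ≠ 0 := by
    rintro rfl
    rw [Matrix.det_fin_zero] at hM
    norm_num at hM
  haveI : NeZero n := ⟨hn⟩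
  set d : Fin n → ℝ := fun i => if (i : ℕ) = 0 then (-1 : ℝ) else 1 with hddef
  set D : Matrix (Fin n) (Fin n) ℝ := Matrix.diagonal d with hDdef
  have hD2 : D * D = 1 := by
    rw [hDdef, diagonal_mul_diagonal, ← Matrix.diagonal_one]
    refine congrArg Matrix.diagonal (funext fun i => ?_)
    by_cases h : (i : ℕ) = 0 <;> simp only [hddef, h, if_true, if_false] <;> norm_num
  have hdetD : D.det = -1 := by
    rw [hDdef, Matrix.det_diagonal]
    rw [Finset.prod_eq_single (0 : Fin n)]
    · simp [hddef]
    · intro b _ hb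
      have hbz : (b : ℕ) ≠ 0 := fun h => hb (Fin.ext (by simp [h]))
      simp [hddef, hbz, hb]
    · intro h
      exact absurd (Finset.mem_univ _) h
  set M' : Matrix (Fin n) (Fin n) ℝ := D * M with hM'def
  have hdetM' : 0 < M'.det := by
    rw [hM'def, Matrix.det_mul, hdetD]
    linarith
  set T : Matrix (Fin n) (Fin n) ℝ := M' * M'ᴴ with hTdef
  have hT : T.IsHermitian := Matrix.isHermitian_mul_conjTranspose_self M'
  set μ : Fin n → ℝ := hT.eigenvalues with hμdef
  set U : Matrix (Fin n) (Fin n) ℝ := (Matrix.IsHermitian.eigenvectorUnitary hT : Matrix (Fin n) (Fin n) ℝ) with hUdef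
  have hU1 : U * star U = 1 :=
    Matrix.mem_unitaryGroup_iff.mp (Matrix.IsHermitian.eigenvectorUnitary hT).2
  have hU2 : star U * U = 1 :=
    Matrix.mem_unitaryGroup_iff'.mp (Matrix.IsHermitian.eigenvectorUnitary hT).2
  have hspec : T = U * Matrix.diagonal μ * star U := by
    have h := hT.spectral_theorem
    simpa [hUdef, hμdef] using h
  have hμnonneg : ∀ i, 0 ≤ μ i := fun i =>
    Matrix.eigenvalues_self_mul_conjTranspose_nonneg M' i
  have hdetT : T.det = M'.det * M'.det := by
    rw [hTdef, Matrix.det_mul, Matrix.det_conjTranspose]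
    simp
  have hμpos : ∀ i, 0 < μ i := by
    intro i
    rcases lt_or_eq_of_le (hμnonneg i) with h | h
    · exact h
    · exfalso
      have hprod : T.det = ∏ j, μ j := by
        have := hT.det_eq_prod_eigenvalues
        simpa [hμdef] using this
      have hzero : (∏ j, μ j) = 0 := Finset.prod_eq_zero (Finset.mem_univ i) h.symm
      rw [hprod, hzero] at hdetT
      nlinarith [hdetM']
  set B₁ : Matrix (Fin n) (Fin n) ℝ :=
    U * Matrix.diagonal (fun i => Real.log (μ i) / 2) * star U with hB₁def
  have hconj_exp : ∀ v : Fin n → ℝ,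
      exp (U * Matrix.diagonal v * star U)
        = U * Matrix.diagonal (fun i => Real.exp (v i)) * star U := by
    intro v
    rw [exp_conj_star hU1, exp_diag]
  have hUdd : ∀ v w : Fin n → ℝ,
      (U * Matrix.diagonal v * star U) * (U * Matrix.diagonal w * star U)
        = U * Matrix.diagonal (fun i => v i * w i) * star U := by
    intro v w
    calc (U * Matrix.diagonal v * star U) * (U * Matrix.diagonal w * star U)
        = U * (Matrix.diagonal v * ((star U * U) * (Matrix.diagonal w * star U))) := by
          simp only [Matrix.mul_assoc]
      _ = U * (Matrix.diagonal v * Matrix.diagonal w) * star U := by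
          rw [hU2, Matrix.one_mul]; simp only [Matrix.mul_assoc]
      _ = U * Matrix.diagonal (fun i => v i * w i) * star U := by rw [diagonal_mul_diagonal]
  have hnegB₁ : -B₁ = U * Matrix.diagonal (fun i => -(Real.log (μ i) / 2)) * star U := by
    rw [hB₁def, ← Matrix.diagonal_neg, Matrix.mul_neg, Matrix.neg_mul]
  have hRR1 : exp B₁ * exp (-B₁) = 1 := by
    rw [hB₁def, hnegB₁, hconj_exp, hconj_exp, hUdd]
    have : (fun i => Real.exp (Real.log (μ i) / 2) * Real.exp (-(Real.log (μ i) / 2)))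
        = fun _ => (1 : ℝ) := by
      funext i
      rw [← Real.exp_add]
      norm_num
    rw [this, Matrix.diagonal_one, Matrix.mul_one, hU1]
  have hRR1' : exp (-B₁) * exp B₁ = 1 := by
    rw [hB₁def, hnegB₁, hconj_exp, hconj_exp, hUdd]
    have : (fun i => Real.exp (-(Real.log (μ i) / 2)) * Real.exp (Real.log (μ i) / 2))
        = fun _ => (1 : ℝ) := by
      funext i
      rw [← Real.exp_add]
      norm_num
    rw [this, Matrix.diagonal_one, Matrix.mul_one, hU1]
  have hRRT : exp B₁ * exp B₁ = T := by
    rw [hB₁def, hconj_exp, hUdd, hspec]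
    congr 1
    refine congrArg (fun X => U * X) (congrArg Matrix.diagonal (funext fun i => ?_))
    rw [← Real.exp_add]
    have : Real.log (μ i) / 2 + Real.log (μ i) / 2 = Real.log (μ i) := by ring
    rw [this, Real.exp_log (hμpos i)]
  set Q : Matrix (Fin n) (Fin n) ℝ := exp (-B₁) * M' with hQdef
  have hB₁star : star B₁ = B₁ := by
    rw [hB₁def]
    simp only [StarMul.star_mul, star_star]
    have hdstar : star (Matrix.diagonal (fun i => Real.log (μ i) / 2))
        = Matrix.diagonal (fun i => Real.log (μ i) / 2) := by
      rw [Matrix.star_eq_conjTranspose, Matrix.diagonal_conjTranspose]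
      simp
    rw [hdstar]
    simp only [Matrix.mul_assoc]
  have hexpnegstar : star (exp (-B₁)) = exp (-B₁) := by
    rw [NormedSpace.star_exp, star_neg, hB₁star]
  have hQQ : Q * star Q = 1 := by
    rw [hQdef]
    have hstar : star (exp (-B₁) * M') = M'ᴴ * exp (-B₁) := by
      rw [StarMul.star_mul, hexpnegstar, Matrix.star_eq_conjTranspose]
    rw [hstar]
    calc exp (-B₁) * M' * (M'ᴴ * exp (-B₁))
        = exp (-B₁) * (M' * M'ᴴ) * exp (-B₁) := by simp only [Matrix.mul_assoc]
      _ = exp (-B₁) * (exp B₁ * exp B₁) * exp (-B₁) := by rw [← hTdef, ← hRRT]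
      _ = (exp (-B₁) * exp B₁) * (exp B₁ * exp (-B₁)) := by
          simp only [Matrix.mul_assoc]
      _ = 1 := by rw [hRR1', hRR1, Matrix.one_mul]
  have hQQ2 : star Q * Q = 1 := mul_eq_one_comm.mp hQQ
  have hdetQpos : 0 < Q.det := by
    rw [hQdef, Matrix.det_mul]
    exact mul_pos (det_exp_pos _) hdetM'
  have hdetQ : Q.det = 1 := by
    have h1' : Q.det * Q.det = 1 := by
      have hh : (Q * star Q).det = 1 := by rw [hQQ, Matrix.det_one]
      rw [Matrix.det_mul, Matrix.star_eq_conjTranspose, Matrix.det_conjTranspose] at hh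
      simpa using hh
    nlinarith
  obtain ⟨B₂, hB₂⟩ := so_log Q hQQ hQQ2 hdetQ
  refine ⟨B₁, B₂, ?_⟩
  rw [hB₂, hQdef]
  calc M = (D * D) * M := by rw [hD2, Matrix.one_mul]
    _ = D * (exp B₁ * (exp (-B₁) * M')) := by
        rw [← Matrix.mul_assoc (exp B₁), hRR1, Matrix.one_mul, hM'def]
        simp only [Matrix.mul_assoc]
end

section
/- Let A ∈ M_n(ℝ) be invertible. Then the (2n)×(2n) block-diagonal matrix M with two diagonal blocks equal to A (and zero off-diagonal blocks) has a logarithm in M_{2n}(ℝ): there exists B ∈ M_{2n}(ℝ) with e^B = M. -/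
open Polynomial Finset

noncomputable def logPoly (d : ℕ) : Polynomial ℂ :=
  ∑ i ∈ range d, C ((-1)^i / (i+1) : ℂ) * X^(i+1)

noncomputable def expPoly (d : ℕ) : Polynomial ℂ :=
  ∑ j ∈ range (d+1), C ((j.factorial : ℂ)⁻¹) * (logPoly d)^j

lemma X_dvd_logPoly (d : ℕ) : X ∣ logPoly d := by
  apply Finset.dvd_sum
  intro i _
  exact Dvd.dvd.mul_left (dvd_pow_self X (Nat.succ_ne_zero i)) _

lemma deriv_logPoly (d : ℕ) :
    derivative (logPoly d) = ∑ i ∈ range d, (-X : Polynomial ℂ)^i := by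
  unfold logPoly
  rw [derivative_sum]
  refine Finset.sum_congr rfl fun i _ => ?_
  rw [derivative_C_mul, derivative_X_pow]
  have hC : ((-X : Polynomial ℂ))^i = C ((-1 : ℂ)^i) * X^i := by
    rw [map_pow, map_neg, map_one, ← neg_one_mul, mul_pow]
  have hne : ((i : ℂ) + 1) ≠ 0 := Nat.cast_add_one_ne_zero i
  rw [hC, Nat.add_sub_cancel, ← mul_assoc, ← C_mul]
  congr 2
  push_cast
  field_simp

lemma deriv_logPoly_mul (d : ℕ) :
    (1 + X) * derivative (logPoly d) = 1 - (-X : Polynomial ℂ)^d := by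
  rw [deriv_logPoly]
  have := geom_sum_mul (-X : Polynomial ℂ) d
  linear_combination -this


lemma deriv_expPoly (d : ℕ) :
    derivative (expPoly d)
      = derivative (logPoly d) *
          (expPoly d - C ((d.factorial : ℂ)⁻¹) * (logPoly d)^d) := by
  have hstep : ∀ j ∈ range (d+1),
      derivative (C ((j.factorial:ℂ)⁻¹) * logPoly d ^ j)
        = C ((j.factorial:ℂ)⁻¹) * (C (j:ℂ) * logPoly d ^ (j-1) * derivative (logPoly d)) :=
    fun j _ => by rw [derivative_C_mul, derivative_pow]
  have hRHS : expPoly d - C ((d.factorial : ℂ)⁻¹) * (logPoly d)^d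
      = ∑ j ∈ range d, C ((j.factorial:ℂ)⁻¹) * logPoly d ^ j := by
    rw [expPoly, Finset.sum_range_succ]; ring
  rw [hRHS]
  conv_lhs => rw [expPoly]
  rw [derivative_sum, Finset.sum_congr rfl hstep, Finset.sum_range_succ' _ d]
  simp only [Nat.cast_zero, map_zero, zero_mul, mul_zero, add_zero, zero_mul, mul_zero]
  rw [Finset.mul_sum]
  refine (Finset.sum_congr rfl fun i _ => ?_)
  have hfac : ((i+1).factorial : ℂ)⁻¹ * ((i:ℂ)+1) = ((i.factorial : ℂ))⁻¹ := by
    rw [Nat.factorial_succ]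
    push_cast
    have h1 : ((i:ℂ)+1) ≠ 0 := Nat.cast_add_one_ne_zero i
    have h2 : ((i.factorial : ℂ)) ≠ 0 := Nat.cast_ne_zero.mpr i.factorial_ne_zero
    field_simp
  push_cast
  rw [← hfac, C_mul]
  ring

lemma key_dvd (d : ℕ) :
    (X:Polynomial ℂ)^d ∣
      ((1+X) * derivative (expPoly d - 1 - X) - (expPoly d - 1 - X)) := by
  have h1 : (X:Polynomial ℂ)^d ∣ (-X)^d := by
    rw [neg_pow]; exact Dvd.intro_left _ rfl
  have h2 : (X:Polynomial ℂ)^d ∣ logPoly d ^ d := pow_dvd_pow_of_dvd (X_dvd_logPoly d) d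
  have main : (1+X) * derivative (expPoly d - 1 - X) - (expPoly d - 1 - X)
      = -((-X)^d * expPoly d)
        - (1 - (-X)^d) * (C ((d.factorial:ℂ)⁻¹) * logPoly d^d) := by
    rw [derivative_sub, derivative_sub, derivative_one, derivative_X]
    linear_combination (expPoly d - C ((d.factorial:ℂ)⁻¹) * logPoly d^d) * (deriv_logPoly_mul d)
      + (1+X) * (deriv_expPoly d)
  rw [main]
  exact dvd_sub (dvd_neg.mpr (h1.mul_right _)) ((h2.mul_left _).mul_left _)

lemma eval_zero_logPoly (d : ℕ) : (logPoly d).eval 0 = 0 := by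
  obtain ⟨q, hq⟩ := X_dvd_logPoly d
  simp [hq]

lemma expPoly_key (d : ℕ) : (X:Polynomial ℂ)^d ∣ (expPoly d - 1 - X) := by
  set h := expPoly d - 1 - X with hh
  have hcoeff : ∀ r, r < d → h.coeff r = 0 := by
    intro r
    induction r with
    | zero =>
      intro hd
      have he : (expPoly d).coeff 0 = 1 := by
        rw [Polynomial.coeff_zero_eq_eval_zero, expPoly]
        rw [Polynomial.eval_finset_sum]
        rw [Finset.sum_range_succ' _ d]
        simp [eval_zero_logPoly d]
      simp [hh, he, Polynomial.coeff_one, Polynomial.coeff_X]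
    | succ r ih =>
      intro hd
      have hr : r < d := Nat.lt_of_succ_lt hd
      have ihr := ih hr
      have h0 : ((1+X) * derivative h - h).coeff r = 0 :=
        Polynomial.X_pow_dvd_iff.mp (key_dvd d) r hr
      have hexp : (1+X) * derivative h = derivative h + X * derivative h := by ring
      rw [hexp, Polynomial.coeff_sub, Polynomial.coeff_add, Polynomial.coeff_derivative] at h0
      have hXmul : (X * derivative h).coeff r = 0 := by
        cases r with
        | zero => simp [Polynomial.mul_coeff_zero]
        | succ k =>
          rw [Polynomial.coeff_X_mul, Polynomial.coeff_derivative, ihr]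
          simp
      rw [hXmul, ihr] at h0
      have h0' : h.coeff (r+1) * ((r:ℂ)+1) = 0 := by linear_combination h0
      rcases mul_eq_zero.mp h0' with h1 | h1
      · exact h1
      · exact absurd h1 (Nat.cast_add_one_ne_zero r)
  exact Polynomial.X_pow_dvd_iff.mpr hcoeff

section MatrixLog

open NormedSpace

attribute [local instance] Matrix.linftyOpNormedRing Matrix.linftyOpNormedAlgebra

variable {m : Type*} [Fintype m] [DecidableEq m]

lemma commute_aeval' (N Y : Matrix m m ℂ) (hc : Commute Y N) (p : Polynomial ℂ) :
    Commute Y (Polynomial.aeval N p) := by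
  rw [Polynomial.aeval_eq_sum_range]
  exact Commute.sum_right _ _ _ fun i _ => (hc.pow_right i).smul_right _

lemma exp_eq_sum_of_nilpotent {d : ℕ} {N : Matrix m m ℂ} (h : N ^ d = 0) :
    exp N = ∑ k ∈ Finset.range d, ((k.factorial : ℂ))⁻¹ • N ^ k := by
  rw [exp_eq_tsum ℂ]
  refine tsum_eq_sum fun k hk => ?_
  have hk' : d ≤ k := by simpa using hk
  have : N ^ k = 0 := by
    rw [← Nat.sub_add_cancel hk', pow_add, h, mul_zero]
  simp [this]

lemma exists_log_unipotent (N : Matrix m m ℂ) (hN : IsNilpotent N) :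
    ∃ L : Matrix m m ℂ, exp L = 1 + N ∧
      ∀ Y : Matrix m m ℂ, Commute Y N → Commute Y L := by
  obtain ⟨d, hd⟩ := hN
  set L := Polynomial.aeval N (logPoly d) with hL
  obtain ⟨q, hq⟩ := X_dvd_logPoly d
  have hLd : L ^ d = 0 := by
    rw [hL, ← map_pow, hq, mul_pow, map_mul, map_pow, Polynomial.aeval_X, hd, zero_mul]
  refine ⟨L, ?_, fun Y hc => commute_aeval' N Y hc _⟩
  have hsum : exp L = ∑ k ∈ Finset.range (d+1), ((k.factorial : ℂ))⁻¹ • L ^ k := by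
    rw [exp_eq_sum_of_nilpotent hLd, Finset.sum_range_succ]
    have : L ^ d = 0 := hLd
    simp [this]
  have haev : exp L = Polynomial.aeval N (expPoly d) := by
    rw [hsum, expPoly, map_sum]
    refine Finset.sum_congr rfl fun j _ => ?_
    rw [map_mul, map_pow, Polynomial.aeval_C, ← hL, Algebra.smul_def]
  obtain ⟨r, hr⟩ := expPoly_key d
  have hexpPoly : expPoly d = 1 + Polynomial.X + Polynomial.X ^ d * r := by
    linear_combination hr
  rw [haev, hexpPoly]
  rw [map_add, map_add, map_one, map_mul, map_pow, Polynomial.aeval_X, hd, zero_mul, add_zero]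

end MatrixLog

section SemisimpleLog

open NormedSpace
open scoped Matrix

attribute [local instance] Matrix.linftyOpNormedRing Matrix.linftyOpNormedAlgebra

variable {m : Type*} [Fintype m] [DecidableEq m]

/-- mulVec as a continuous linear map in the matrix argument. -/
noncomputable def mulVecCLM (v : m → ℂ) : Matrix m m ℂ →L[ℂ] (m → ℂ) :=
  { toLinearMap :=
      { toFun := fun X => X *ᵥ v
        map_add' := fun X Y => Matrix.add_mulVec X Y v
        map_smul' := fun c X => Matrix.smul_mulVec c X v }
    cont := by
      exact continuous_id.matrix_mulVec continuous_const }

lemma pow_mulVec_eigen {L : Matrix m m ℂ} {μ : ℂ} {v : m → ℂ} (hv : L *ᵥ v = μ • v) (k : ℕ) :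
    L ^ k *ᵥ v = μ ^ k • v := by
  induction k with
  | zero => simp
  | succ k ih =>
    rw [pow_succ', ← Matrix.mulVec_mulVec, ih, Matrix.mulVec_smul, hv, smul_smul, ← pow_succ]

lemma exp_mulVec_eigen (L : Matrix m m ℂ) {μ : ℂ} {v : m → ℂ} (hv : L *ᵥ v = μ • v) :
    exp L *ᵥ v = Complex.exp μ • v := by
  have h1 : exp L *ᵥ v = mulVecCLM v (∑' k : ℕ, ((k.factorial : ℂ))⁻¹ • L ^ k) := by
    rw [exp_eq_tsum ℂ]; rfl
  rw [h1, ContinuousLinearMap.map_tsum (mulVecCLM v) (expSeries_summable' (𝕂 := ℂ) L)]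
  have h2 : ∀ k : ℕ, mulVecCLM v (((k.factorial : ℂ))⁻¹ • L ^ k)
      = (((k.factorial : ℂ))⁻¹ • μ ^ k) • v := by
    intro k
    rw [map_smul]
    show ((k.factorial : ℂ))⁻¹ • (L ^ k *ᵥ v) = _
    rw [pow_mulVec_eigen hv, smul_smul, smul_eq_mul]
  rw [tsum_congr h2, (expSeries_summable' (𝕂 := ℂ) μ).tsum_smul_const]
  congr 1
  rw [Complex.exp_eq_exp_ℂ, exp_eq_tsum ℂ]

lemma aeval_mulVec_eigen {S : Matrix m m ℂ} {μ : ℂ} {v : m → ℂ} (hv : S *ᵥ v = μ • v)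
    (p : Polynomial ℂ) : (Polynomial.aeval S p) *ᵥ v = p.eval μ • v := by
  rw [Polynomial.aeval_eq_sum_range, Polynomial.eval_eq_sum_range]
  have h1 : (∑ i ∈ Finset.range (p.natDegree + 1), p.coeff i • S ^ i) *ᵥ v
      = mulVecCLM v (∑ i ∈ Finset.range (p.natDegree + 1), p.coeff i • S ^ i) := rfl
  rw [h1, map_sum, Finset.sum_smul]
  refine Finset.sum_congr rfl fun i _ => ?_
  rw [map_smul]
  show p.coeff i • (S ^ i *ᵥ v) = _
  rw [pow_mulVec_eigen hv i, smul_smul]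

lemma exists_log_semisimple (S : Matrix m m ℂ) (hS : IsUnit S)
    (hss : Module.End.IsSemisimple (R := ℂ) (M := m → ℂ) (Matrix.toLin' S)) :
    ∃ L : Matrix m m ℂ, exp L = S ∧ ∀ Y : Matrix m m ℂ, Commute Y S → Commute Y L := by
  classical
  set f : Module.End ℂ (m → ℂ) := Matrix.toLin' S with hf
  set nodes : Finset ℂ := (minpoly ℂ f).roots.toFinset with hnodes
  set P : Polynomial ℂ := Lagrange.interpolate nodes id Complex.log with hP
  set L : Matrix m m ℂ := Polynomial.aeval S P with hL
  refine ⟨L, ?_, fun Y hc => commute_aeval' S Y hc _⟩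
  -- show exp L = S via action on vectors
  have htop : ⨆ μ, f.eigenspace μ = ⊤ := by
    have h1 := Module.End.iSup_maxGenEigenspace_eq_top f
    have h2 := hss.isFinitelySemisimple.maxGenEigenspace_eq_eigenspace
    simp_rw [h2] at h1
    exact h1
  have key : ∀ v : m → ℂ, exp L *ᵥ v = S *ᵥ v := by
    intro v
    have hv : v ∈ (⊤ : Submodule ℂ (m → ℂ)) := trivial
    rw [← htop] at hv
    refine Submodule.iSup_induction (motive := fun w => exp L *ᵥ w = S *ᵥ w) _ hv (fun μ x hx => ?_)
      (by show exp L *ᵥ 0 = S *ᵥ 0; simp)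
      (fun x y hx hy => by
        show exp L *ᵥ (x + y) = S *ᵥ (x + y)
        rw [Matrix.mulVec_add, Matrix.mulVec_add, hx, hy])
    show exp L *ᵥ x = S *ᵥ x
    by_cases hx0 : x = 0
    · simp [hx0]
    have hSx : S *ᵥ x = μ • x := by
      have hme := (Module.End.mem_eigenspace_iff).mp hx
      rwa [hf, Matrix.toLin'_apply] at hme
    have heig : f.HasEigenvalue μ :=
      Module.End.hasEigenvalue_of_hasEigenvector ⟨hx, hx0⟩
    have hroot : (minpoly ℂ f).IsRoot μ := Module.End.hasEigenvalue_iff_isRoot.mp heig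
    have hne : minpoly ℂ f ≠ 0 := minpoly.ne_zero_of_finite ℂ f
    have hmem : μ ∈ nodes := by
      rw [hnodes, Multiset.mem_toFinset, Polynomial.mem_roots hne]
      exact hroot
    have hmu0 : μ ≠ 0 := by
      rintro rfl
      obtain ⟨u, hu⟩ := hS
      have hinv : (↑u⁻¹ : Matrix m m ℂ) *ᵥ (S *ᵥ x) = x := by
        rw [Matrix.mulVec_mulVec, ← hu, Units.inv_mul, Matrix.one_mulVec]
      rw [hSx, zero_smul, Matrix.mulVec_zero] at hinv
      exact hx0 hinv.symm
    have hPmu : P.eval μ = Complex.log μ := by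
      rw [hP]
      exact Lagrange.eval_interpolate_at_node _ (Set.injOn_id _) hmem
    have hLx : L *ᵥ x = Complex.log μ • x := by
      rw [hL, aeval_mulVec_eigen hSx, hPmu]
    rw [exp_mulVec_eigen _ hLx, Complex.exp_log hmu0, hSx]
  apply Matrix.toLin'.injective
  apply LinearMap.ext
  intro v
  rw [Matrix.toLin'_apply, Matrix.toLin'_apply, key]

end SemisimpleLog

section ComplexLog

open NormedSpace
open scoped Matrix

variable {m : Type*} [Fintype m] [DecidableEq m]

lemma commute_aeval_gen {A : Type*} [Ring A] [Algebra ℂ A] (N Y : A) (hc : Commute Y N)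
    (p : Polynomial ℂ) : Commute Y (Polynomial.aeval N p) := by
  rw [Polynomial.aeval_eq_sum_range]
  exact Commute.sum_right _ _ _ fun i _ => (hc.pow_right i).smul_right _

theorem exists_exp_eq_complex (M : Matrix m m ℂ) (hM : IsUnit M) :
    ∃ L : Matrix m m ℂ, exp L = M := by
  classical
  set E := (Matrix.toLinAlgEquiv' : Matrix m m ℂ ≃ₐ[ℂ] Module.End ℂ (m → ℂ)) with hE
  set f : Module.End ℂ (m → ℂ) := E M with hfdef
  obtain ⟨nn, hnmem, ss, hsmem, hnil, hss, hsum⟩ :=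
    Module.End.exists_isNilpotent_isSemisimple (f := f)
  rw [Algebra.adjoin_singleton_eq_range_aeval] at hnmem hsmem
  obtain ⟨pn, hpn⟩ := hnmem
  obtain ⟨ps, hps⟩ := hsmem
  have hcfn : Commute f nn := by rw [← hpn]; exact commute_aeval_gen f f (Commute.refl f) pn
  have hcfs : Commute f ss := by rw [← hps]; exact commute_aeval_gen f f (Commute.refl f) ps
  have hcns : Commute nn ss := by rw [← hps]; exact commute_aeval_gen f nn hcfn.symm ps
  have hfU : IsUnit f := hM.map E
  have hu : (hfU.unit : Module.End ℂ (m → ℂ)) = f := hfU.unit_spec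
  have hcun : Commute (↑hfU.unit⁻¹ : Module.End ℂ (m → ℂ)) nn :=
    Commute.units_inv_left (by rw [hu]; exact hcfn)
  have hnil2 : IsNilpotent ((↑hfU.unit⁻¹ : Module.End ℂ (m → ℂ)) * nn) :=
    hcun.isNilpotent_mul_left hnil
  have hss' : ss = f - nn := by rw [hsum]; abel
  have hssu : ss = ↑hfU.unit * (1 - ↑hfU.unit⁻¹ * nn) := by
    rw [mul_sub, mul_one, ← mul_assoc, Units.mul_inv, one_mul, hu, hss']
  have hssU : IsUnit ss := by
    rw [hssu]
    exact (Units.isUnit hfU.unit).mul hnil2.isUnit_one_sub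
  set Smat := E.symm ss with hSmatdef
  set Nmat := E.symm nn with hNmatdef
  have hM2 : M = Nmat + Smat := by
    have h := congrArg E.symm hsum
    rw [map_add] at h
    rw [← h, hfdef, AlgEquiv.symm_apply_apply]
  have hSU : IsUnit Smat := hssU.map E.symm
  have hNnil : IsNilpotent Nmat := by
    obtain ⟨k, hk⟩ := hnil
    exact ⟨k, by rw [hNmatdef, ← map_pow, hk, map_zero]⟩
  have hcSN : Commute Smat Nmat := by
    show Smat * Nmat = Nmat * Smat
    rw [hSmatdef, hNmatdef, ← map_mul, ← map_mul, hcns.eq]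
  have hsemi : Module.End.IsSemisimple (R := ℂ) (M := m → ℂ) (Matrix.toLin' Smat) := by
    have heq : Matrix.toLin' Smat = ss := by
      have h2 : E Smat = ss := E.apply_symm_apply ss
      rw [← h2]
      apply LinearMap.ext
      intro v
      rw [Matrix.toLin'_apply, hE, Matrix.toLinAlgEquiv'_apply]
    rw [heq]
    exact hss
  have hsu : (hSU.unit : Matrix m m ℂ) = Smat := hSU.unit_spec
  set N' := (↑hSU.unit⁻¹ : Matrix m m ℂ) * Nmat with hN'def
  have hcSinvN : Commute (↑hSU.unit⁻¹ : Matrix m m ℂ) Nmat :=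
    Commute.units_inv_left (by rw [hsu]; exact hcSN)
  have hN'nil : IsNilpotent N' := hcSinvN.isNilpotent_mul_left hNnil
  obtain ⟨L2, hL2, hL2c⟩ := exists_log_unipotent N' hN'nil
  obtain ⟨L1, hL1, hL1c⟩ := exists_log_semisimple Smat hSU hsemi
  have hcN'S : Commute N' Smat := by
    have h1 : Commute Smat (↑hSU.unit⁻¹ : Matrix m m ℂ) :=
      Commute.units_inv_right (by rw [hsu]; exact Commute.refl _)
    exact (h1.mul_right hcSN).symm
  have hcL12 : Commute L1 L2 := hL2c L1 (hL1c N' hcN'S).symm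
  refine ⟨L1 + L2, ?_⟩
  rw [Matrix.exp_add_of_commute L1 L2 hcL12, hL1, hL2]
  have hsinv : Smat * (↑hSU.unit⁻¹ : Matrix m m ℂ) = 1 := hSU.mul_val_inv
  rw [mul_add, mul_one, hN'def, ← mul_assoc, hsinv, one_mul, hM2, add_comm]
end ComplexLog

section Realify

open NormedSpace
open scoped Matrix

attribute [local instance] Matrix.linftyOpNormedRing Matrix.linftyOpNormedAlgebra

variable {ι : Type*} [Fintype ι] [DecidableEq ι]

lemma re_of_mul (M N : Matrix ι ι ℂ) :
    (M * N).map Complex.re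
      = M.map Complex.re * N.map Complex.re - M.map Complex.im * N.map Complex.im := by
  ext i j
  simp [Matrix.mul_apply, Matrix.map_apply, Complex.mul_re, Matrix.sub_apply,
    Finset.sum_sub_distrib]

lemma im_of_mul (M N : Matrix ι ι ℂ) :
    (M * N).map Complex.im
      = M.map Complex.re * N.map Complex.im + M.map Complex.im * N.map Complex.re := by
  ext i j
  simp [Matrix.mul_apply, Matrix.map_apply, Complex.mul_im, Matrix.add_apply,
    Finset.sum_add_distrib]

noncomputable def realifyHom : Matrix ι ι ℂ →ₐ[ℝ] Matrix (ι ⊕ ι) (ι ⊕ ι) ℝ where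
  toFun M := Matrix.fromBlocks (M.map Complex.re) (-(M.map Complex.im))
      (M.map Complex.im) (M.map Complex.re)
  map_one' := by
    have h1 : (1 : Matrix ι ι ℂ).map Complex.re = 1 := by
      ext i j; simp [Matrix.map_apply, Matrix.one_apply, apply_ite]
    have h2 : (1 : Matrix ι ι ℂ).map Complex.im = 0 := by
      ext i j; simp [Matrix.map_apply, Matrix.one_apply, apply_ite]
    rw [h1, h2, neg_zero, Matrix.fromBlocks_one]
  map_mul' M N := by
    rw [Matrix.fromBlocks_multiply, re_of_mul, im_of_mul]
    simp only [neg_mul, mul_neg]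
    congr 1 <;> abel
  map_zero' := by
    have h1 : (0 : Matrix ι ι ℂ).map Complex.re = 0 := by ext i j; simp [Matrix.map_apply]
    have h2 : (0 : Matrix ι ι ℂ).map Complex.im = 0 := by ext i j; simp [Matrix.map_apply]
    rw [h1, h2, neg_zero]
    ext i j
    rcases i with i | i <;> rcases j with j | j <;> simp
  map_add' M N := by
    have h1 : (M + N).map Complex.re = M.map Complex.re + N.map Complex.re := by
      ext i j; simp [Matrix.map_apply]
    have h2 : (M + N).map Complex.im = M.map Complex.im + N.map Complex.im := by
      ext i j; simp [Matrix.map_apply]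
    rw [h1, h2]
    ext i j
    rcases i with i | i <;> rcases j with j | j <;>
      simp [Matrix.fromBlocks, Matrix.add_apply] <;> ring
  commutes' r := by
    rw [Matrix.algebraMap_eq_diagonal, Matrix.algebraMap_eq_diagonal]
    have h1 : (Matrix.diagonal ((algebraMap ℝ (ι → ℂ)) r)).map Complex.re
        = Matrix.diagonal (fun _ => r) := by
      ext i j
      by_cases hij : i = j
      · subst hij; simp [Matrix.map_apply, Pi.algebraMap_apply]
      · simp [Matrix.map_apply, Matrix.diagonal_apply_ne _ hij]
    have h2 : (Matrix.diagonal ((algebraMap ℝ (ι → ℂ)) r)).map Complex.im = 0 := by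
      ext i j
      by_cases hij : i = j
      · subst hij; simp [Matrix.map_apply, Pi.algebraMap_apply]
      · simp [Matrix.map_apply, Matrix.diagonal_apply_ne _ hij]
    rw [h1, h2, neg_zero, Matrix.fromBlocks_diagonal]
    have helim : (algebraMap ℝ (ι ⊕ ι → ℝ)) r = Sum.elim (fun _ => r) (fun _ => r) := by
      funext x; rcases x with x | x <;> simp [Pi.algebraMap_apply]
    rw [helim]

lemma continuous_realifyHom : Continuous (realifyHom (ι := ι)) := by
  apply continuous_matrix
  intro i j
  have hre : ∀ (a b : ι), Continuous fun M : Matrix ι ι ℂ => (M a b).re := fun a b =>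
    Complex.continuous_re.comp ((continuous_apply b).comp (continuous_apply a))
  have him : ∀ (a b : ι), Continuous fun M : Matrix ι ι ℂ => (M a b).im := fun a b =>
    Complex.continuous_im.comp ((continuous_apply b).comp (continuous_apply a))
  rcases i with i | i <;> rcases j with j | j <;>
    simp only [realifyHom, AlgHom.coe_mk, Matrix.fromBlocks_apply₁₁, Matrix.fromBlocks_apply₁₂,
      Matrix.fromBlocks_apply₂₁, Matrix.fromBlocks_apply₂₂, Matrix.map_apply, Matrix.neg_apply]
  · exact hre i j
  · exact (him i j).neg
  · exact him i j
  · exact hre i j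

end Realify

/-- If `A ∈ Mₙ(ℝ)` is invertible, then the `2n × 2n` block-diagonal matrix with two
diagonal blocks equal to `A` has a real logarithm. -/
theorem stmt17 {n : ℕ} (A : Matrix (Fin n) (Fin n) ℝ) (hA : IsUnit A) :
    ∃ B : Matrix (Fin n ⊕ Fin n) (Fin n ⊕ Fin n) ℝ,
      NormedSpace.exp B = Matrix.fromBlocks A 0 0 A := by
  classical
  letI : NormedRing (Matrix (Fin n) (Fin n) ℂ) := Matrix.linftyOpNormedRing
  letI : NormedAlgebra ℝ (Matrix (Fin n) (Fin n) ℂ) := Matrix.linftyOpNormedAlgebra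
  letI : NormedAlgebra ℚ (Matrix (Fin n) (Fin n) ℂ) := Matrix.linftyOpNormedAlgebra
  letI : NormedRing (Matrix (Fin n ⊕ Fin n) (Fin n ⊕ Fin n) ℝ) := Matrix.linftyOpNormedRing
  letI : NormedAlgebra ℝ (Matrix (Fin n ⊕ Fin n) (Fin n ⊕ Fin n) ℝ) :=
    Matrix.linftyOpNormedAlgebra
  letI : NormedAlgebra ℚ (Matrix (Fin n ⊕ Fin n) (Fin n ⊕ Fin n) ℝ) :=
    Matrix.linftyOpNormedAlgebra
  have hMc : IsUnit (A.map (algebraMap ℝ ℂ)) := by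
    have := hA.map ((algebraMap ℝ ℂ).mapMatrix)
    rwa [RingHom.mapMatrix_apply] at this
  obtain ⟨L, hL⟩ := exists_exp_eq_complex (A.map (algebraMap ℝ ℂ)) hMc
  refine ⟨realifyHom L, ?_⟩
  have hexp : NormedSpace.exp L = NormedSpace.exp L := rfl
  have h1 : NormedSpace.exp (realifyHom L) = realifyHom (NormedSpace.exp L) := by
    have := NormedSpace.map_exp (realifyHom (ι := Fin n)) continuous_realifyHom L
    exact this.symm
  rw [h1, hexp, hL]
  show Matrix.fromBlocks _ _ _ _ = _
  have h2 : (A.map (algebraMap ℝ ℂ)).map Complex.re = A := by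
    ext i j; simp [Matrix.map_apply]
  have h3 : (A.map (algebraMap ℝ ℂ)).map Complex.im = 0 := by
    ext i j; simp [Matrix.map_apply]
  rw [h2, h3, neg_zero]
end
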